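/- arXiv:2306.07658 — 7 statements merged into one kernel-verified Lean document; each statement's English description precedes it below -/
import Mathlib

section
/- For solutions of the undelayed weighted Hegselmann-Krause system with K := ‖ψ‖_∞, for all indices i, j, every unit vector v ∈ ℝ^d, every n and all times t ≥ t̄ ≥ t_n, one has ⟨x_i(t) − x_j(t), v⟩ ≤ e^{−K(t−t̄)} ⟨x_i(t̄) − x_j(t̄), v⟩ + (1 − e^{−K(t−t̄)}) d(t_n). -/
open scoped RealInnerProductSpace

open Filter Topology Set

/-- Auxiliary lemma: if each `g k` is differentiable with derivative `d k` and at every point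
where `k` attains the max the derivative is nonpositive, then the max at time `a` bounds
everything on `[a, b]`. -/
lemma sup'_le_of_deriv_nonpos {ι : Type*} [Fintype ι] (hne : (Finset.univ : Finset ι).Nonempty)
    {g d : ι → ℝ → ℝ} {a b : ℝ}
    (hg : ∀ k s, s ∈ Set.Icc a b → HasDerivAt (g k) (d k s) s)
    (hd : ∀ k s, s ∈ Set.Ico a b → (∀ l, g l s ≤ g k s) → d k s ≤ 0) :
    ∀ s ∈ Set.Icc a b, ∀ k, g k s ≤ Finset.univ.sup' hne (fun l => g l a) := by
  classical
  set G : ℝ → ℝ := fun s => Finset.univ.sup' hne (fun l => g l s) with hG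
  have hSne : ∀ s : ℝ, (Finset.univ.filter (fun k => g k s = G s)).Nonempty := by
    intro s
    obtain ⟨k, -, hk⟩ := Finset.exists_mem_eq_sup' hne (fun l => g l s)
    exact ⟨k, Finset.mem_filter.mpr ⟨Finset.mem_univ k, hk.symm⟩⟩
  have key : ∀ s ∈ Set.Icc a b, G s ≤ gronwallBound (G a) 0 0 (s - a) := by
    refine le_gronwallBound_of_liminf_deriv_right_le
      (f' := fun s => (Finset.univ.filter (fun k => g k s = G s)).sup' (hSne s) (fun k => d k s))
      ?_ ?_ le_rfl ?_
    · intro s hs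
      exact (ContinuousAt.finset_sup'_apply hne
        fun k _ => (hg k s hs).continuousAt).continuousWithinAt
    · intro s hs r hr
      have hmax : ∀ k, g k s = G s → d k s < r := by
        intro k hk
        exact (Finset.sup'_lt_iff (hSne s)).mp hr k
          (Finset.mem_filter.mpr ⟨Finset.mem_univ k, hk⟩)
      have hev : ∀ k : ι, ∀ᶠ z in 𝓝[>] s, g k z < G s + r * (z - s) := by
        intro k
        by_cases hk : g k s = G s
        · have hslope : Tendsto (slope (g k) s) (𝓝[>] s) (𝓝 (d k s)) := by
            refine (hasDerivAt_iff_tendsto_slope.mp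
              (hg k s (Set.Ico_subset_Icc_self hs))).mono_left
              (nhdsWithin_mono s ?_)
            intro z hz
            exact Set.mem_compl_singleton_iff.mpr (Set.mem_Ioi.mp hz).ne'
          filter_upwards [hslope.eventually_lt_const (hmax k hk), self_mem_nhdsWithin]
            with z hz hz'
          have hzs : 0 < z - s := sub_pos.mpr hz'
          rw [slope_def_field] at hz
          have := (div_lt_iff₀ hzs).mp hz
          have hk' : g k s = G s := hk
          linarith
        · have h1 : Tendsto (g k) (𝓝[>] s) (𝓝 (g k s)) :=
            ((hg k s (Set.Ico_subset_Icc_self hs)).continuousAt.tendsto).mono_left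
              nhdsWithin_le_nhds
          have h2 : Tendsto (fun z : ℝ => G s + r * (z - s)) (𝓝[>] s) (𝓝 (G s)) := by
            have hc : Continuous fun z : ℝ => G s + r * (z - s) := by continuity
            have := (hc.tendsto s).mono_left (nhdsWithin_le_nhds (s := Set.Ioi s))
            simpa using this
          exact h1.eventually_lt h2
            (lt_of_le_of_ne (Finset.le_sup' (fun l => g l s) (Finset.mem_univ k)) hk)
      have hall : ∀ᶠ z in 𝓝[>] s, ∀ k : ι, g k z < G s + r * (z - s) :=
        eventually_all.mpr hev
      refine ((hall.and self_mem_nhdsWithin).mono ?_).frequently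
      rintro z ⟨hz, hz'⟩
      have hzs : 0 < z - s := sub_pos.mpr hz'
      have hGz : G z < G s + r * (z - s) :=
        (Finset.sup'_lt_iff hne).mpr fun k _ => hz k
      rw [inv_mul_lt_iff₀ hzs]
      linarith
    · intro s hs
      rw [zero_mul, zero_add]
      refine Finset.sup'_le _ _ fun k hk => ?_
      have hk' := (Finset.mem_filter.mp hk).2
      refine hd k s hs fun l => ?_
      rw [hk']
      exact Finset.le_sup' (fun l => g l s) (Finset.mem_univ l)
  intro s hs k
  have h1 : g k s ≤ G s := Finset.le_sup' (fun l => g l s) (Finset.mem_univ k)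
  have h2 := key s hs
  rw [gronwallBound_K0] at h2
  have h2' : G s ≤ G a := by simpa using h2
  exact h1.trans h2'

/-- Gronwall-type projected diameter estimate for the undelayed system. -/
theorem hk_projected_diameter_estimate
    {dim N : ℕ} (hN : 2 ≤ N)
    (ψ : EuclideanSpace ℝ (Fin dim) → EuclideanSpace ℝ (Fin dim) → ℝ)
    (hψpos : ∀ y z, 0 < ψ y z)
    (hψbdd : ∃ K, ∀ y z, ψ y z ≤ K)
    (hψcont : Continuous fun p : EuclideanSpace ℝ (Fin dim) × EuclideanSpace ℝ (Fin dim) => ψ p.1 p.2)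
    (α : ℝ → ℝ) (hαcont : Continuous α) (hα01 : ∀ t, α t ∈ Set.Icc (0:ℝ) 1)
    (x : Fin N → ℝ → EuclideanSpace ℝ (Fin dim))
    (hode : ∀ i t, 0 ≤ t → HasDerivAt (x i)
      ((α t / ((N : ℝ) - 1)) •
        ∑ j ∈ Finset.univ.filter (fun j => j ≠ i),
          ψ (x i t) (x j t) • (x j t - x i t)) t)
    (K : ℝ) (hK : ∀ y z, ψ y z ≤ K)
    (diam : ℝ → ℝ) (hdiam : ∀ t, diam t = ⨆ i, ⨆ j, ‖x i t - x j t‖)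
    (tseq : ℕ → ℝ) (htseq0 : 0 ≤ tseq 0) (htseqmono : StrictMono tseq)
    (i j : Fin N) (v : EuclideanSpace ℝ (Fin dim)) (hv : ‖v‖ = 1)
    (n : ℕ) (tbar t : ℝ) (h1 : tseq n ≤ tbar) (h2 : tbar ≤ t) :
    ⟪x i t - x j t, v⟫ ≤ Real.exp (-K * (t - tbar)) * ⟪x i tbar - x j tbar, v⟫
      + (1 - Real.exp (-K * (t - tbar))) * diam (tseq n) := by
  classical
  have hNe : (Finset.univ : Finset (Fin N)).Nonempty := ⟨i, Finset.mem_univ i⟩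
  have hN1 : (0:ℝ) < (N:ℝ) - 1 := by
    have : (2:ℝ) ≤ (N:ℝ) := by exact_mod_cast hN
    linarith
  have hKpos : 0 < K := lt_of_lt_of_le (hψpos 0 0) (hK 0 0)
  set a := tseq n with haeq
  have ha0 : 0 ≤ a := le_trans htseq0 (htseqmono.monotone (Nat.zero_le n))
  set g : Fin N → ℝ → ℝ := fun k s => ⟪v, x k s⟫ with hgdef
  set d : Fin N → ℝ → ℝ := fun k s =>
    (α s / ((N:ℝ) - 1)) * ∑ l ∈ Finset.univ.filter (fun l => l ≠ k),
      ψ (x k s) (x l s) * (g l s - g k s) with hddef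
  have hg : ∀ k s, 0 ≤ s → HasDerivAt (g k) (d k s) s := by
    intro k s hs
    have h := (innerSL ℝ v).hasFDerivAt.comp_hasDerivAt s (hode k s hs)
    refine h.congr_deriv ?_
    simp only [hddef, hgdef, ContinuousLinearMap.coe_comp',
      Function.comp_apply, innerSL_apply_apply, inner_smul_right, inner_sum, inner_sub_right,
      Finset.mul_sum]
  have hc : ∀ s : ℝ, 0 ≤ α s / ((N:ℝ) - 1) := fun s => div_nonneg (hα01 s).1 hN1.le
  -- upper invariance
  set M := Finset.univ.sup' hNe (fun l => g l a) with hM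
  have hup : ∀ s ∈ Set.Icc a t, ∀ k, g k s ≤ M := by
    refine sup'_le_of_deriv_nonpos hNe (fun k s hs => hg k s (le_trans ha0 hs.1)) ?_
    intro k s hs hmax
    rw [hddef]
    refine mul_nonpos_iff.mpr (Or.inl ⟨hc s, Finset.sum_nonpos fun l _ => ?_⟩)
    exact mul_nonpos_iff.mpr (Or.inl ⟨(hψpos _ _).le, sub_nonpos.mpr (hmax l)⟩)
  -- lower invariance
  set m := Finset.univ.sup' hNe (fun l => -(g l a)) with hm
  have hlo : ∀ s ∈ Set.Icc a t, ∀ k, -(g k s) ≤ m := by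
    refine sup'_le_of_deriv_nonpos hNe (g := fun k s => -(g k s)) (d := fun k s => -(d k s))
      (fun k s hs => (hg k s (le_trans ha0 hs.1)).neg) ?_
    intro k s hs hmax
    rw [neg_nonpos, hddef]
    refine mul_nonneg (hc s) (Finset.sum_nonneg fun l _ => ?_)
    refine mul_nonneg (hψpos _ _).le (sub_nonneg.mpr ?_)
    have hml := hmax l
    linarith
  -- M + m is at most the diameter at time a
  have hMm : M + m ≤ diam a := by
    obtain ⟨k1, -, hk1⟩ := Finset.exists_mem_eq_sup' hNe (fun l => g l a)
    obtain ⟨k2, -, hk2⟩ := Finset.exists_mem_eq_sup' hNe (fun l => -(g l a))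
    have he : M + m = ⟪v, x k1 a - x k2 a⟫ := by
      rw [hM, hm, hk1, hk2]
      simp only [hgdef, inner_sub_right]
      ring
    have hle : ⟪v, x k1 a - x k2 a⟫ ≤ ‖x k1 a - x k2 a‖ := by
      have := real_inner_le_norm v (x k1 a - x k2 a)
      rwa [hv, one_mul] at this
    have hdle : ‖x k1 a - x k2 a‖ ≤ diam a := by
      rw [hdiam]
      calc ‖x k1 a - x k2 a‖ ≤ ⨆ jj, ‖x k1 a - x jj a‖ :=
            le_ciSup (f := fun jj => ‖x k1 a - x jj a‖)
              (Set.Finite.bddAbove (Set.finite_range _)) k2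
        _ ≤ ⨆ ii, ⨆ jj, ‖x ii a - x jj a‖ :=
            le_ciSup (f := fun ii => ⨆ jj, ‖x ii a - x jj a‖)
              (Set.Finite.bddAbove (Set.finite_range _)) k1
    linarith
  set D := diam a with hD
  -- main Gronwall estimate
  have key : ∀ s ∈ Set.Icc tbar t,
      g i s - g j s ≤ gronwallBound (g i tbar - g j tbar) (-K) (K * D) (s - tbar) := by
    have h0 : ∀ s : ℝ, s ∈ Set.Icc tbar t → 0 ≤ s := fun s hs =>
      le_trans (le_trans ha0 h1) hs.1
    refine le_gronwallBound_of_liminf_deriv_right_le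
      (f' := fun s => d i s - d j s) ?_ ?_ le_rfl ?_
    · intro s hs
      exact (((hg i s (h0 s hs)).sub (hg j s (h0 s hs))).continuousAt).continuousWithinAt
    · intro s hs r hr
      have hds := ((hg i s (h0 s (Set.Ico_subset_Icc_self hs))).sub
        (hg j s (h0 s (Set.Ico_subset_Icc_self hs)))).hasDerivWithinAt
        (s := Set.Ici s)
      refine (hds.liminf_right_slope_le hr).mono fun z hz => ?_
      rwa [slope_def_field, div_eq_inv_mul] at hz
    · intro s hs
      show d i s - d j s ≤ -K * (g i s - g j s) + K * D
      have hsa : s ∈ Set.Icc a t := ⟨le_trans h1 hs.1, hs.2.le⟩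
      have hgiM : g i s ≤ M := hup s hsa i
      have hgjm : -m ≤ g j s := by have := hlo s hsa j; linarith
      have card_eq : (((Finset.univ : Finset (Fin N)).filter (fun l => l ≠ i)).card : ℝ)
          = (N:ℝ) - 1 := by
        rw [Finset.filter_ne', Finset.card_erase_of_mem (Finset.mem_univ i)]
        rw [Finset.card_univ, Fintype.card_fin, Nat.cast_sub (by omega)]
        simp
      have card_eq' : (((Finset.univ : Finset (Fin N)).filter (fun l => l ≠ j)).card : ℝ)
          = (N:ℝ) - 1 := by
        rw [Finset.filter_ne', Finset.card_erase_of_mem (Finset.mem_univ j)]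
        rw [Finset.card_univ, Fintype.card_fin, Nat.cast_sub (by omega)]
        simp
      have term1 : ∀ l, ψ (x i s) (x l s) * (g l s - g i s) ≤ K * (M - g i s) := by
        intro l
        rcases le_total (g l s) (g i s) with h | h
        · have ht1 : ψ (x i s) (x l s) * (g l s - g i s) ≤ 0 :=
            mul_nonpos_iff.mpr (Or.inl ⟨(hψpos _ _).le, by linarith⟩)
          have ht2 : 0 ≤ K * (M - g i s) := mul_nonneg hKpos.le (by linarith)
          linarith
        · calc ψ (x i s) (x l s) * (g l s - g i s) ≤ K * (g l s - g i s) :=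
              mul_le_mul_of_nonneg_right (hK _ _) (by linarith)
            _ ≤ K * (M - g i s) :=
              mul_le_mul_of_nonneg_left (by linarith [hup s hsa l]) hKpos.le
      have term2 : ∀ l, K * (-m - g j s) ≤ ψ (x j s) (x l s) * (g l s - g j s) := by
        intro l
        have hml : -m ≤ g l s := by have := hlo s hsa l; linarith
        rcases le_total (g l s) (g j s) with h | h
        · have h1' : K * (-m - g j s) ≤ K * (g l s - g j s) :=
            mul_le_mul_of_nonneg_left (by linarith) hKpos.le
          have h2' : K * (g l s - g j s) ≤ ψ (x j s) (x l s) * (g l s - g j s) := by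
            nlinarith [hK (x j s) (x l s), (hψpos (x j s) (x l s)).le]
          linarith
        · have h1' : 0 ≤ ψ (x j s) (x l s) * (g l s - g j s) :=
            mul_nonneg (hψpos _ _).le (by linarith)
          have h2' : K * (-m - g j s) ≤ 0 :=
            mul_nonpos_iff.mpr (Or.inl ⟨hKpos.le, by linarith⟩)
          linarith
      have hS1 : ∑ l ∈ Finset.univ.filter (fun l => l ≠ i),
          ψ (x i s) (x l s) * (g l s - g i s) ≤ ((N:ℝ) - 1) * (K * (M - g i s)) := by
        calc ∑ l ∈ Finset.univ.filter (fun l => l ≠ i), ψ (x i s) (x l s) * (g l s - g i s)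
            ≤ ∑ _l ∈ Finset.univ.filter (fun l => l ≠ i), K * (M - g i s) :=
              Finset.sum_le_sum fun l _ => term1 l
          _ = ((N:ℝ) - 1) * (K * (M - g i s)) := by
              rw [Finset.sum_const, nsmul_eq_mul, card_eq]
      have hS2 : ((N:ℝ) - 1) * (K * (-m - g j s)) ≤ ∑ l ∈ Finset.univ.filter (fun l => l ≠ j),
          ψ (x j s) (x l s) * (g l s - g j s) := by
        calc ((N:ℝ) - 1) * (K * (-m - g j s))
            = ∑ _l ∈ Finset.univ.filter (fun l => l ≠ j), K * (-m - g j s) := by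
              rw [Finset.sum_const, nsmul_eq_mul, card_eq']
          _ ≤ ∑ l ∈ Finset.univ.filter (fun l => l ≠ j), ψ (x j s) (x l s) * (g l s - g j s) :=
              Finset.sum_le_sum fun l _ => term2 l
      have hdi : d i s ≤ α s * (K * (M - g i s)) := by
        rw [hddef]
        calc (α s / ((N:ℝ) - 1)) * ∑ l ∈ Finset.univ.filter (fun l => l ≠ i),
            ψ (x i s) (x l s) * (g l s - g i s)
            ≤ (α s / ((N:ℝ) - 1)) * (((N:ℝ) - 1) * (K * (M - g i s))) :=
              mul_le_mul_of_nonneg_left hS1 (hc s)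
          _ = α s * (K * (M - g i s)) := by field_simp
      have hdj : α s * (K * (-m - g j s)) ≤ d j s := by
        rw [hddef]
        calc α s * (K * (-m - g j s))
            = (α s / ((N:ℝ) - 1)) * (((N:ℝ) - 1) * (K * (-m - g j s))) := by
              field_simp
          _ ≤ (α s / ((N:ℝ) - 1)) * ∑ l ∈ Finset.univ.filter (fun l => l ≠ j),
              ψ (x j s) (x l s) * (g l s - g j s) :=
              mul_le_mul_of_nonneg_left hS2 (hc s)
      have hfs : g i s - g j s ≤ M + m := by linarith
      have hsum : d i s - d j s ≤ α s * (K * (M + m - (g i s - g j s))) := by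
        calc d i s - d j s ≤ α s * (K * (M - g i s)) - α s * (K * (-m - g j s)) :=
              sub_le_sub hdi hdj
          _ = α s * (K * (M + m - (g i s - g j s))) := by ring
      have hα : α s * (K * (M + m - (g i s - g j s))) ≤ 1 * (K * (M + m - (g i s - g j s))) :=
        mul_le_mul_of_nonneg_right (hα01 s).2 (mul_nonneg hKpos.le (by linarith))
      have hMD : K * (M + m - (g i s - g j s)) ≤ K * (D - (g i s - g j s)) :=
        mul_le_mul_of_nonneg_left (by linarith) hKpos.le
      have hring : K * (D - (g i s - g j s)) = -K * (g i s - g j s) + K * D := by ring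
      linarith
  have hfin := key t ⟨h2, le_refl t⟩
  rw [gronwallBound_of_K_ne_0 (neg_ne_zero.mpr hKpos.ne')] at hfin
  have hDq : K * D / -K = -D := by
    rw [div_neg, mul_comm K D, mul_div_assoc, div_self hKpos.ne', mul_one]
  rw [hDq] at hfin
  beta_reduce at hfin
  have e1 : ⟪x i t - x j t, v⟫ = g i t - g j t := by
    simp only [hgdef, inner_sub_right]
    rw [inner_sub_left, real_inner_comm (x i t) v, real_inner_comm (x j t) v]
  have e2 : ⟪x i tbar - x j tbar, v⟫ = g i tbar - g j tbar := by
    simp only [hgdef, inner_sub_right]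
    rw [inner_sub_left, real_inner_comm (x i tbar) v, real_inner_comm (x j tbar) v]
  rw [e1, e2]
  have hre : (g i tbar - g j tbar) * Real.exp (-K * (t - tbar))
      + -D * (Real.exp (-K * (t - tbar)) - 1)
      = Real.exp (-K * (t - tbar)) * (g i tbar - g j tbar)
        + (1 - Real.exp (-K * (t - tbar))) * D := by ring
  linarith
end

section
/- Consider the undelayed weighted Hegselmann-Krause system where the weight α satisfies: there exist T > 0 and times 0 = t_0 < t_1 < ... with t_n − t_{n−1} ≤ T and ∫_{t_{n−1}}^{t_n} α(t) dt ≥ ᾱ > 0 for all n. Then there is a constant C ∈ (0,1), independent of N, namely C = max{1 − e^{−KT}, 1 − ψ_0 e^{−KT} ᾱ}, such that d(t_n) ≤ C · d(t_{n−1}) for all n ≥ 1, where K = ‖ψ‖_∞ and ψ_0 = min_{|y|,|z| ≤ M^0} ψ(y,z) with M^0 = max_i |x_i(0)|. -/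
open Set Filter
open scoped Topology

/-- Fencing lemma for a finite family: if each `g i` starts below `B` and at every point
where some `g i` is maximal among the family and touches `B`, its derivative is strictly
below that of `B`, then every `g i` stays below `B` on `[a,b]`. -/
lemma fence_finite_max {ι : Type*} [Fintype ι] [Nonempty ι] {a b : ℝ}
    (g g' : ι → ℝ → ℝ) (B B' : ℝ → ℝ)
    (hg : ∀ i, ∀ t ∈ Icc a b, HasDerivAt (g i) (g' i t) t)
    (hB : ∀ t ∈ Icc a b, HasDerivAt B (B' t) t)
    (ha : ∀ i, g i a ≤ B a)
    (key : ∀ t ∈ Ico a b, ∀ i, (∀ j, g j t ≤ g i t) → g i t = B t → g' i t < B' t) :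
    ∀ t ∈ Icc a b, ∀ i, g i t ≤ B t := by
  classical
  set F : ℝ → ℝ := fun t => Finset.univ.sup' Finset.univ_nonempty (fun i => g i t) with hF
  have hgle : ∀ i t, g i t ≤ F t := fun i t =>
    Finset.le_sup' (f := fun i => g i t) (Finset.mem_univ i)
  have hargmax : ∀ t, ∃ i : ι, (∀ j, g j t ≤ g i t) ∧ g i t = F t := by
    intro t
    obtain ⟨i, -, hi⟩ := Finset.exists_max_image Finset.univ (fun i => g i t)
      Finset.univ_nonempty
    refine ⟨i, fun j => hi j (Finset.mem_univ j), le_antisymm (hgle i t) ?_⟩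
    exact Finset.sup'_le _ _ fun j _ => hi j (Finset.mem_univ j)
  -- the "derivative" of F : sup of derivatives over argmax set
  set D : ℝ → ℝ := fun t =>
    ((Finset.univ.filter (fun i : ι => ∀ j, g j t ≤ g i t)).sup'
      (by
        obtain ⟨i, hi, -⟩ := hargmax t
        exact ⟨i, Finset.mem_filter.2 ⟨Finset.mem_univ i, hi⟩⟩)
      (fun i => g' i t)) with hD
  have hFcont : ContinuousOn F (Icc a b) :=
    ContinuousOn.finset_sup'_apply Finset.univ_nonempty fun i _ t ht =>
      ((hg i t ht).continuousAt).continuousWithinAt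
  have hslope : ∀ t ∈ Ico a b, ∀ r, D t < r → ∃ᶠ z in 𝓝[>] t, slope F t z < r := by
    intro t ht r hr
    have hev : ∀ i : ι, ∀ᶠ z in 𝓝[>] t, g i z < F t + r * (z - t) := by
      intro i
      by_cases hc : g i t = F t
      · -- argmax index: use derivative
        have hmem : i ∈ Finset.univ.filter (fun i : ι => ∀ j, g j t ≤ g i t) := by
          refine Finset.mem_filter.2 ⟨Finset.mem_univ i, fun j => ?_⟩
          rw [hc]; exact hgle j t
        have hgi : g' i t ≤ D t := Finset.le_sup' (f := fun i => g' i t) hmem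
        have hda := (hg i t (Ico_subset_Icc_self ht))
        have hts : Tendsto (slope (g i) t) (𝓝[≠] t) (𝓝 (g' i t)) :=
          hasDerivAt_iff_tendsto_slope.1 hda
        have : ∀ᶠ z in 𝓝[≠] t, slope (g i) t z < r :=
          hts.eventually (Filter.Tendsto.eventually_lt_const (lt_of_le_of_lt hgi hr) tendsto_id)
        have h2 : ∀ᶠ z in 𝓝[>] t, slope (g i) t z < r :=
          this.filter_mono (nhdsWithin_mono _ fun z hz => ne_of_gt hz)
        filter_upwards [h2, self_mem_nhdsWithin] with z hz hz'
        have hzt : 0 < z - t := sub_pos.2 hz'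
        rw [slope_def_field, div_lt_iff₀ hzt] at hz
        have : g i z - g i t < r * (z - t) := by linarith [hz]
        linarith [this, hc.le, hc.ge]
      · -- strictly submaximal index: use continuity
        have hlt : g i t < F t := lt_of_le_of_ne (hgle i t) hc
        set c := F t - g i t with hcdef
        have hcpos : 0 < c := by simp [hcdef]; linarith
        have hcont : Tendsto (g i) (𝓝 t) (𝓝 (g i t)) :=
          ((hg i t (Ico_subset_Icc_self ht)).continuousAt)
        have h1 : ∀ᶠ z in 𝓝 t, g i z < g i t + c / 2 :=
          hcont.eventually (Filter.Tendsto.eventually_lt_const (by linarith) tendsto_id)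
        have h2 : ∀ᶠ z in 𝓝 t, |z - t| < c / (2 * (|r| + 1)) := by
          have : Tendsto (fun z : ℝ => |z - t|) (𝓝 t) (𝓝 0) := by
            have : Tendsto (fun z : ℝ => z - t) (𝓝 t) (𝓝 (t - t)) :=
              tendsto_id.sub tendsto_const_nhds
            simpa using this.abs
          refine this.eventually (Filter.Tendsto.eventually_lt_const ?_ tendsto_id)
          positivity
        filter_upwards [nhdsWithin_le_nhds h1, nhdsWithin_le_nhds h2,
          self_mem_nhdsWithin] with z hz1 hz2 hz3
        have hzt : 0 < z - t := sub_pos.2 hz3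
        have habs : |r| * (z - t) < c / 2 := by
          have hr1 : |r| * (z - t) ≤ (|r| + 1) * (z - t) := by nlinarith [abs_nonneg r]
          have h2' : (|r| + 1) * (z - t) < c / 2 := by
            rw [abs_of_pos hzt] at hz2
            have hpos : (0:ℝ) < |r| + 1 := by positivity
            calc (|r| + 1) * (z - t) < (|r| + 1) * (c / (2 * (|r| + 1))) := by
                  exact mul_lt_mul_of_pos_left hz2 hpos
              _ = c / 2 := by field_simp
          linarith
        have hrz : -(c / 2) < r * (z - t) := by
          have := neg_abs_le r
          nlinarith [abs_nonneg r]
        have : g i z < F t - c / 2 := by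
          have : g i t + c / 2 = F t - c / 2 := by rw [hcdef]; ring
          linarith [hz1]
        linarith
    have hall : ∀ᶠ z in 𝓝[>] t, ∀ i, g i z < F t + r * (z - t) := eventually_all.2 hev
    refine ((hall.and self_mem_nhdsWithin).mono ?_).frequently
    rintro z ⟨hz, hz'⟩
    have hzt : 0 < z - t := sub_pos.2 hz'
    have : F z < F t + r * (z - t) := by
      rw [hF]
      exact (Finset.sup'_lt_iff _).2 fun i _ => hz i
    rw [slope_def_field, div_lt_iff₀ hzt]
    linarith
  have hbound : ∀ t ∈ Ico a b, F t = B t → D t < B' t := by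
    intro t ht hFB
    rw [hD]
    refine (Finset.sup'_lt_iff _).2 fun i hi => ?_
    obtain ⟨-, hi⟩ := Finset.mem_filter.1 hi
    have : g i t = F t := le_antisymm (hgle i t)
      ((hargmax t).elim fun j hj => hj.2 ▸ hi j)
    exact key t ht i hi (this.trans hFB)
  have main := image_le_of_liminf_slope_right_lt_deriv_boundary' hFcont hslope
    (Finset.sup'_le _ _ fun i _ => ha i)
    (fun t ht => ((hB t ht).continuousAt).continuousWithinAt)
    (fun t ht => (hB t (Ico_subset_Icc_self ht)).hasDerivWithinAt) hbound
  exact fun t ht i => (hgle i t).trans (main ht)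

open scoped RealInnerProductSpace

set_option maxHeartbeats 1000000 in
/-- one-step contraction of the diameter for the undelayed system under
the persistence condition (WF), with explicit contraction constant
C = max {1 - e^{-KT}, 1 - ψ₀ e^{-KT} ᾱ} independent of N. -/
theorem hk_diameter_contraction
    {dim N : ℕ} (hN : 2 ≤ N)
    (ψ : EuclideanSpace ℝ (Fin dim) → EuclideanSpace ℝ (Fin dim) → ℝ)
    (hψpos : ∀ y z, 0 < ψ y z)
    (hψbdd : ∃ K, ∀ y z, ψ y z ≤ K)
    (hψcont : Continuous fun p : EuclideanSpace ℝ (Fin dim) × EuclideanSpace ℝ (Fin dim) => ψ p.1 p.2)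
    (α : ℝ → ℝ) (hαcont : Continuous α) (hα01 : ∀ t, α t ∈ Set.Icc (0:ℝ) 1)
    (x : Fin N → ℝ → EuclideanSpace ℝ (Fin dim))
    (hode : ∀ i t, 0 ≤ t → HasDerivAt (x i)
      ((α t / ((N : ℝ) - 1)) •
        ∑ j ∈ Finset.univ.filter (fun j => j ≠ i),
          ψ (x i t) (x j t) • (x j t - x i t)) t)
    (T abar : ℝ) (hT : 0 < T) (habar : 0 < abar)
    (tseq : ℕ → ℝ) (ht0 : tseq 0 = 0) (htmono : StrictMono tseq)
    (hgap : ∀ n : ℕ, tseq (n + 1) - tseq n ≤ T)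
    (hint : ∀ n : ℕ, abar ≤ ∫ t in (tseq n)..(tseq (n + 1)), α t)
    (K : ℝ) (hK : ∀ y z, ψ y z ≤ K)
    (M0 : ℝ) (hM0 : M0 = ⨆ i, ‖x i 0‖)
    (ψ0 : ℝ)
    (hψ0 : ψ0 = sInf {r : ℝ | ∃ y z : EuclideanSpace ℝ (Fin dim),
      ‖y‖ ≤ M0 ∧ ‖z‖ ≤ M0 ∧ ψ y z = r})
    (diam : ℝ → ℝ) (hdiam : ∀ t, diam t = ⨆ i, ⨆ j, ‖x i t - x j t‖)
    (C : ℝ)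
    (hC : C = max (1 - Real.exp (-K * T)) (1 - ψ0 * Real.exp (-K * T) * abar)) :
    C ∈ Set.Ioo (0:ℝ) 1 ∧ ∀ n : ℕ, 1 ≤ n → diam (tseq n) ≤ C * diam (tseq (n - 1)) := by
  classical
  haveI : NeZero N := ⟨by omega⟩
  have hNpos : (0:ℝ) < (N : ℝ) - 1 := by
    have : (2:ℝ) ≤ (N:ℝ) := by exact_mod_cast hN
    linarith
  have hα0 : ∀ t, 0 ≤ α t := fun t => (hα01 t).1
  have hα1 : ∀ t, α t ≤ 1 := fun t => (hα01 t).2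
  -- initial data bounds
  have hbdd0 : BddAbove (Set.range fun i : Fin N => ‖x i 0‖) :=
    Set.Finite.bddAbove (Set.finite_range _)
  have hM0le : ∀ i, ‖x i 0‖ ≤ M0 := fun i => hM0 ▸ le_ciSup hbdd0 i
  have hM0nonneg : (0:ℝ) ≤ M0 := le_trans (norm_nonneg _) (hM0le 0)
  -- K is positive
  have hKpos : 0 < K := lt_of_lt_of_le (hψpos 0 0) (hK 0 0)
  -- ψ0 facts
  have hψ0bdd : BddBelow {r : ℝ | ∃ y z : EuclideanSpace ℝ (Fin dim),
      ‖y‖ ≤ M0 ∧ ‖z‖ ≤ M0 ∧ ψ y z = r} := by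
    refine ⟨0, ?_⟩
    rintro r ⟨y, z, -, -, rfl⟩
    exact (hψpos y z).le
  have hψ0le : ∀ y z : EuclideanSpace ℝ (Fin dim), ‖y‖ ≤ M0 → ‖z‖ ≤ M0 → ψ0 ≤ ψ y z := by
    intro y z hy hz
    rw [hψ0]
    exact csInf_le hψ0bdd ⟨y, z, hy, hz, rfl⟩
  have hzeromem : ‖(0 : EuclideanSpace ℝ (Fin dim))‖ ≤ M0 := by simpa using hM0nonneg
  have hψ0K : ψ0 ≤ K := (hψ0le 0 0 hzeromem hzeromem).trans (hK 0 0)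
  have hψ0pos : 0 < ψ0 := by
    have hSeq : {r : ℝ | ∃ y z : EuclideanSpace ℝ (Fin dim),
        ‖y‖ ≤ M0 ∧ ‖z‖ ≤ M0 ∧ ψ y z = r}
        = (fun p : EuclideanSpace ℝ (Fin dim) × EuclideanSpace ℝ (Fin dim) => ψ p.1 p.2) ''
          (Metric.closedBall 0 M0 ×ˢ Metric.closedBall 0 M0) := by
      ext r
      constructor
      · rintro ⟨y, z, hy, hz, rfl⟩
        exact ⟨(y, z), ⟨by simpa [Metric.mem_closedBall, dist_zero_right] using hy,
          by simpa [Metric.mem_closedBall, dist_zero_right] using hz⟩, rfl⟩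
      · rintro ⟨⟨y, z⟩, ⟨hy, hz⟩, rfl⟩
        exact ⟨y, z, by simpa [Metric.mem_closedBall, dist_zero_right] using hy,
          by simpa [Metric.mem_closedBall, dist_zero_right] using hz, rfl⟩
    have hcpt : IsCompact ((Metric.closedBall (0:EuclideanSpace ℝ (Fin dim)) M0)
        ×ˢ (Metric.closedBall (0:EuclideanSpace ℝ (Fin dim)) M0)) :=
      (isCompact_closedBall _ _).prod (isCompact_closedBall _ _)
    have hne : ((Metric.closedBall (0:EuclideanSpace ℝ (Fin dim)) M0)
        ×ˢ (Metric.closedBall (0:EuclideanSpace ℝ (Fin dim)) M0)).Nonempty :=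
      ⟨(0, 0), by simp [hM0nonneg]⟩
    obtain ⟨p0, hp0, hmin⟩ := hcpt.exists_isMinOn hne hψcont.continuousOn
    have hlb : ψ p0.1 p0.2 ≤ ψ0 := by
      rw [hψ0, hSeq]
      refine le_csInf (hne.image _) ?_
      rintro r ⟨p, hp, rfl⟩
      exact hmin hp
    exact lt_of_lt_of_le (hψpos p0.1 p0.2) hlb
  -- abar ≤ T
  have habarT : abar ≤ T := by
    have h01 : tseq 0 ≤ tseq 1 := (htmono (by omega)).le
    have hintle : (∫ t in (tseq 0)..(tseq 1), α t) ≤ ∫ t in (tseq 0)..(tseq 1), (1:ℝ) := by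
      apply intervalIntegral.integral_mono_on h01
        (hαcont.intervalIntegrable _ _) (intervalIntegrable_const)
      exact fun t _ => hα1 t
    have : (∫ t in (tseq 0)..(tseq 1), (1:ℝ)) = tseq 1 - tseq 0 := by simp
    calc abar ≤ ∫ t in (tseq 0)..(tseq 1), α t := hint 0
      _ ≤ tseq 1 - tseq 0 := by rw [← this]; exact hintle
      _ ≤ T := hgap 0
  -- C facts
  have heKT0 : 0 < Real.exp (-K * T) := Real.exp_pos _
  have heKT1 : Real.exp (-K * T) < 1 := by
    rw [Real.exp_lt_one_iff]
    nlinarith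
  have hC0 : 0 < C := by
    rw [hC]
    exact lt_of_lt_of_le (by linarith) (le_max_left _ _)
  have hC1 : C < 1 := by
    rw [hC]
    apply max_lt (by linarith)
    nlinarith [mul_pos (mul_pos hψ0pos heKT0) habar]
  have hCmain : Real.exp (-(ψ0 * abar)) ≤ C := by
    have hxKT : ψ0 * abar ≤ K * T :=
      mul_le_mul hψ0K habarT habar.le hKpos.le
    have h1 : Real.exp (-K * T) ≤ Real.exp (-(ψ0 * abar)) :=
      Real.exp_le_exp.2 (by linarith)
    have h2 : (ψ0 * abar + 1) * Real.exp (-(ψ0 * abar)) ≤ 1 := by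
      have := Real.add_one_le_exp (ψ0 * abar)
      have hepos : 0 < Real.exp (-(ψ0 * abar)) := Real.exp_pos _
      have hmul : Real.exp (ψ0 * abar) * Real.exp (-(ψ0 * abar)) = 1 := by
        rw [← Real.exp_add]; simp
      nlinarith
    have h3 : Real.exp (-(ψ0 * abar)) ≤ 1 - ψ0 * Real.exp (-K * T) * abar := by
      nlinarith [mul_le_mul_of_nonneg_left h1 (mul_pos hψ0pos habar).le]
    rw [hC]
    exact le_trans h3 (le_max_right _ _)
  -- diameter facts
  have hbddj : ∀ t i, BddAbove (Set.range fun j : Fin N => ‖x i t - x j t‖) :=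
    fun t i => Set.Finite.bddAbove (Set.finite_range _)
  have hbddi : ∀ t, BddAbove (Set.range fun i : Fin N => ⨆ j, ‖x i t - x j t‖) :=
    fun t => Set.Finite.bddAbove (Set.finite_range _)
  have hpair_le_diam : ∀ t i j, ‖x i t - x j t‖ ≤ diam t := by
    intro t i j
    rw [hdiam]
    exact le_trans (le_ciSup (hbddj t i) j) (le_ciSup (hbddi t) i)
  have hdiam_nonneg : ∀ t, 0 ≤ diam t := by
    intro t
    have := hpair_le_diam t 0 0
    simpa using this
  have hdiam_le : ∀ t c, (∀ i j, ‖x i t - x j t‖ ≤ c) → diam t ≤ c := by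
    intro t c h
    rw [hdiam]
    exact ciSup_le fun i => ciSup_le fun j => h i j
  -- velocity field
  obtain ⟨v, hv⟩ : ∃ v : Fin N → ℝ → EuclideanSpace ℝ (Fin dim), v = fun i t =>
      (α t / ((N : ℝ) - 1)) •
        ∑ j ∈ Finset.univ.filter (fun j => j ≠ i),
          ψ (x i t) (x j t) • (x j t - x i t) := ⟨_, rfl⟩
  have hode' : ∀ i t, 0 ≤ t → HasDerivAt (x i) (v i t) t := by
    intro i t ht
    rw [hv]
    exact hode i t ht
  -- inner products of positions with velocities
  have hinner_v : ∀ (w : EuclideanSpace ℝ (Fin dim)) (i : Fin N) (t : ℝ), ⟪w, v i t⟫ =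
      (α t / ((N : ℝ) - 1)) * ∑ j ∈ Finset.univ.filter (fun j => j ≠ i),
        ψ (x i t) (x j t) * ⟪w, x j t - x i t⟫ := by
    intro w i t
    rw [hv]
    rw [real_inner_smul_right, inner_sum]
    congr 1
    exact Finset.sum_congr rfl fun j _ => real_inner_smul_right _ _ _
  -- ball invariance
  have hball : ∀ (i : Fin N) (t : ℝ), 0 ≤ t → ‖x i t‖ ≤ M0 := by
    intro i t ht
    have hεbound : ∀ ε > 0, ‖x i t‖ ≤ M0 + ε * Real.exp t := by
      intro ε hε
      obtain ⟨g, hgdef⟩ : ∃ g : Fin N → ℝ → ℝ, g = fun j s => ⟪x j s, x j s⟫ := ⟨_, rfl⟩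
      obtain ⟨g', hg'def⟩ : ∃ g' : Fin N → ℝ → ℝ,
        g' = fun j s => ⟪x j s, v j s⟫ + ⟪v j s, x j s⟫ := ⟨_, rfl⟩
      obtain ⟨ρ, hρdef⟩ : ∃ ρ : ℝ → ℝ, ρ = fun s => M0 + ε * Real.exp s := ⟨_, rfl⟩
      have hρpos : ∀ s, 0 < ρ s := fun s => by
        have := Real.exp_pos s
        rw [hρdef]; positivity
      obtain ⟨B, hBdef⟩ : ∃ B : ℝ → ℝ, B = fun s => ρ s ^ 2 := ⟨_, rfl⟩
      obtain ⟨B', hB'def⟩ : ∃ B' : ℝ → ℝ, B' = fun s => 2 * ρ s * (ε * Real.exp s) := ⟨_, rfl⟩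
      have hgderiv : ∀ j, ∀ s ∈ Set.Icc 0 t, HasDerivAt (g j) (g' j s) s := by
        intro j s hs
        simp only [hgdef, hg'def]
        exact (hode' j s hs.1).inner ℝ (hode' j s hs.1)
      have hBderiv : ∀ s ∈ Set.Icc 0 t, HasDerivAt B (B' s) s := by
        intro s _
        have h1 : HasDerivAt ρ (ε * Real.exp s) s := by
          rw [hρdef]
          simpa using ((Real.hasDerivAt_exp s).const_mul ε).const_add M0
        have := h1.pow 2
        rw [hBdef, hB'def]
        exact this.congr_deriv (by ring)
      have hinit : ∀ j, g j 0 ≤ B 0 := by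
        intro j
        have h1 : g j 0 = ‖x j 0‖ ^ 2 := by rw [hgdef]; exact real_inner_self_eq_norm_sq _
        have h2 : B 0 = (M0 + ε) ^ 2 := by rw [hBdef, hρdef]; simp
        rw [h1, h2]
        have := hM0le j
        nlinarith [norm_nonneg (x j 0)]
      have hkey : ∀ s ∈ Set.Ico 0 t, ∀ j, (∀ k, g k s ≤ g j s) → g j s = B s →
          g' j s < B' s := by
        intro s hs j hjmax _
        have hnorm_le : ∀ k, ‖x k s‖ ≤ ‖x j s‖ := by
          intro k
          have := hjmax k
          simp only [hgdef] at this
          simp only [real_inner_self_eq_norm_sq] at this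
          exact le_of_pow_le_pow_left₀ two_ne_zero (norm_nonneg _) this
        have hterm : ∀ k, ψ (x j s) (x k s) * ⟪x j s, x k s - x j s⟫ ≤ 0 := by
          intro k
          apply mul_nonpos_of_nonneg_of_nonpos (hψpos _ _).le
          rw [inner_sub_right]
          have h1 : ⟪x j s, x k s⟫ ≤ ‖x j s‖ * ‖x k s‖ := real_inner_le_norm _ _
          have h2 : ⟪x j s, x j s⟫ = ‖x j s‖ * ‖x j s‖ := real_inner_self_eq_norm_mul_norm _
          nlinarith [hnorm_le k, norm_nonneg (x j s), norm_nonneg (x k s)]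
        have hg'le : g' j s ≤ 0 := by
          have hfac : 0 ≤ α s / ((N : ℝ) - 1) := div_nonneg (hα0 s) hNpos.le
          have hsum : (∑ k ∈ Finset.univ.filter (fun k => k ≠ j),
              ψ (x j s) (x k s) * ⟪x j s, x k s - x j s⟫) ≤ 0 :=
            Finset.sum_nonpos fun k _ => hterm k
          have hxv : ⟪x j s, v j s⟫ ≤ 0 := by
            rw [hinner_v (x j s) j s]
            exact mul_nonpos_of_nonneg_of_nonpos hfac hsum
          have hsymm : ⟪v j s, x j s⟫ = ⟪x j s, v j s⟫ := real_inner_comm _ _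
          simp only [hg'def]
          linarith
        have hB'pos : 0 < B' s := by
          rw [hB'def]
          have := Real.exp_pos s
          have := hρpos s
          positivity
        linarith
      have := fence_finite_max g g' B B' hgderiv hBderiv hinit hkey t
        (Set.right_mem_Icc.2 ht) i
      simp only [hgdef, hBdef] at this
      simp only [real_inner_self_eq_norm_sq] at this
      have := le_of_pow_le_pow_left₀ two_ne_zero (hρpos t).le this
      rwa [hρdef] at this
    refine le_of_forall_pos_le_add fun δ hδ => ?_
    have hexp : 0 < Real.exp t := Real.exp_pos t
    have := hεbound (δ / Real.exp t) (by positivity)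
    rwa [div_mul_cancel₀ _ hexp.ne'] at this
  refine ⟨⟨hC0, hC1⟩, ?_⟩
  intro n hn
  obtain ⟨m, rfl⟩ : ∃ m, n = m + 1 := ⟨n - 1, by omega⟩
  have hidx : m + 1 - 1 = m := by omega
  rw [hidx]
  set a := tseq m with hadef
  set b := tseq (m + 1) with hbdef
  have hab : a < b := htmono (by omega)
  have ha0 : 0 ≤ a := by rw [hadef, ← ht0]; exact htmono.monotone (Nat.zero_le m)
  set dτ := diam a with hdτdef
  have hdτ0 : 0 ≤ dτ := hdiam_nonneg a
  obtain ⟨A, hAdef⟩ : ∃ A : ℝ → ℝ, A = fun t => ∫ s in a..t, α s := ⟨_, rfl⟩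
  have hAderiv : ∀ t, HasDerivAt A (α t) t := by
    intro t
    rw [hAdef]
    exact intervalIntegral.integral_hasDerivAt_right (hαcont.intervalIntegrable a t)
      (hαcont.stronglyMeasurableAtFilter _ _) hαcont.continuousAt
  have hAb : abar ≤ A b := by
    simp only [hAdef]
    rw [hadef, hbdef]
    exact hint m
  -- pairwise bound at time b
  have hpairb : ∀ i j : Fin N, ‖x i b - x j b‖ ≤ Real.exp (-(ψ0 * A b)) * dτ := by
    intro i j
    refine le_of_forall_pos_le_add fun δ hδ => ?_
    have hexpba : 0 < Real.exp (b - a) := Real.exp_pos _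
    set ε := δ / Real.exp (b - a) with hεdef
    have hε : 0 < ε := by rw [hεdef]; positivity
    obtain ⟨ρ, hρdef⟩ : ∃ ρ : ℝ → ℝ,
      ρ = fun t => Real.exp (-(ψ0 * A t)) * dτ + ε * Real.exp (t - a) := ⟨_, rfl⟩
    obtain ⟨ρ', hρ'def⟩ : ∃ ρ' : ℝ → ℝ,
      ρ' = fun t => Real.exp (-(ψ0 * A t)) * (-(ψ0 * α t)) * dτ + ε * Real.exp (t - a) := ⟨_, rfl⟩
    have hρpos : ∀ t, 0 < ρ t := by
      intro t
      have h1 : 0 < Real.exp (t - a) := Real.exp_pos _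
      have h2 : 0 ≤ Real.exp (-(ψ0 * A t)) * dτ := mul_nonneg (Real.exp_pos _).le hdτ0
      simp only [hρdef]
      nlinarith
    have hρderiv : ∀ t, HasDerivAt ρ (ρ' t) t := by
      intro t
      have h1 : HasDerivAt (fun t => -(ψ0 * A t)) (-(ψ0 * α t)) t := ((hAderiv t).const_mul ψ0).neg
      have h2 : HasDerivAt (fun t => Real.exp (-(ψ0 * A t)))
          (Real.exp (-(ψ0 * A t)) * (-(ψ0 * α t))) t := h1.exp
      have h3 := h2.mul_const dτ
      have h4 : HasDerivAt (fun t : ℝ => t - a) 1 t := (hasDerivAt_id t).sub_const a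
      have h5 : HasDerivAt (fun t => Real.exp (t - a)) (Real.exp (t - a) * 1) t := h4.exp
      have h6 := h5.const_mul ε
      have h7 := h3.add h6
      simp only [hρdef, hρ'def]
      exact h7.congr_deriv (by ring)
    obtain ⟨B, hBdef⟩ : ∃ B : ℝ → ℝ, B = fun t => ρ t ^ 2 := ⟨_, rfl⟩
    obtain ⟨B', hB'def⟩ : ∃ B' : ℝ → ℝ, B' = fun t => 2 * ρ t * ρ' t := ⟨_, rfl⟩
    have hBderiv : ∀ t ∈ Set.Icc a b, HasDerivAt B (B' t) t := by
      intro t _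
      have := (hρderiv t).pow 2
      simp only [hBdef, hB'def]
      exact this.congr_deriv (by ring)
    obtain ⟨g, hgdef⟩ : ∃ g : Fin N × Fin N → ℝ → ℝ,
      g = fun p t => ⟪x p.1 t - x p.2 t, x p.1 t - x p.2 t⟫ := ⟨_, rfl⟩
    obtain ⟨g', hg'def⟩ : ∃ g' : Fin N × Fin N → ℝ → ℝ, g' = fun p t =>
      ⟪x p.1 t - x p.2 t, v p.1 t - v p.2 t⟫ + ⟪v p.1 t - v p.2 t, x p.1 t - x p.2 t⟫ := ⟨_, rfl⟩
    have hgderiv : ∀ p, ∀ t ∈ Set.Icc a b, HasDerivAt (g p) (g' p t) t := by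
      intro p t ht
      have h0t : (0:ℝ) ≤ t := ha0.trans ht.1
      simp only [hgdef, hg'def]
      exact ((hode' p.1 t h0t).sub (hode' p.2 t h0t)).inner ℝ
        ((hode' p.1 t h0t).sub (hode' p.2 t h0t))
    have hinit : ∀ p, g p a ≤ B a := by
      intro p
      have h1 : ‖x p.1 a - x p.2 a‖ ≤ dτ := hpair_le_diam a p.1 p.2
      have hAa : A a = 0 := by
        simp only [hAdef]
        exact intervalIntegral.integral_same
      have hρa : ρ a = dτ + ε := by simp only [hρdef]; rw [hAa]; simp
      simp only [hgdef, hBdef, real_inner_self_eq_norm_sq, hρa]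
      nlinarith [norm_nonneg (x p.1 a - x p.2 a)]
    have hkey : ∀ t ∈ Set.Ico a b, ∀ p, (∀ q, g q t ≤ g p t) → g p t = B t →
        g' p t < B' t := by
      rintro t ht ⟨i', j'⟩ hpmax hpB
      have ht0' : (0:ℝ) ≤ t := ha0.trans ht.1
      obtain ⟨u, hu⟩ : ∃ u : EuclideanSpace ℝ (Fin dim), u = x i' t - x j' t := ⟨_, rfl⟩
      have hρtpos : 0 < ρ t := hρpos t
      have huu : ⟪u, u⟫ = ρ t ^ 2 := by
        have := hpB
        simp only [hgdef, hBdef] at this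
        rw [hu]
        exact this
      have hInn : (0:ℝ) ≤ ⟪u, u⟫ := real_inner_self_nonneg
      have hunorm2 : ‖u‖ ^ 2 = ρ t ^ 2 := by rw [← real_inner_self_eq_norm_sq]; exact huu
      have hunorm : ‖u‖ = ρ t :=
        le_antisymm (le_of_pow_le_pow_left₀ two_ne_zero hρtpos.le hunorm2.le)
          (le_of_pow_le_pow_left₀ two_ne_zero (norm_nonneg u) hunorm2.ge)
      have hmaxnorm : ∀ k l, ‖x k t - x l t‖ ≤ ‖u‖ := by
        intro k l
        have h2 : ‖x k t - x l t‖ ^ 2 ≤ ‖u‖ ^ 2 := by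
          have := hpmax (k, l)
          simp only [hgdef, real_inner_self_eq_norm_sq] at this
          simpa [hu, real_inner_self_eq_norm_sq] using this
        exact le_of_pow_le_pow_left₀ two_ne_zero (norm_nonneg u) h2
      have hnormuu : ⟪u, u⟫ = ‖u‖ * ‖u‖ := real_inner_self_eq_norm_mul_norm u
      have hneg : ∀ k, ⟪u, x k t - x i' t⟫ ≤ 0 := by
        intro k
        have hdecomp : x k t - x i' t = (x k t - x j' t) - u := by rw [hu]; abel
        rw [hdecomp, inner_sub_right]
        have h1 : ⟪u, x k t - x j' t⟫ ≤ ‖u‖ * ‖x k t - x j' t‖ := real_inner_le_norm _ _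
        nlinarith [hmaxnorm k j', norm_nonneg u]
      have hpos : ∀ k, 0 ≤ ⟪u, x k t - x j' t⟫ := by
        intro k
        have hdecomp : x k t - x j' t = (x k t - x i' t) + u := by rw [hu]; abel
        rw [hdecomp, inner_add_right]
        have h1 : ⟪u, x i' t - x k t⟫ ≤ ‖u‖ * ‖x i' t - x k t‖ := real_inner_le_norm _ _
        have h1' : ⟪u, x k t - x i' t⟫ = -⟪u, x i' t - x k t⟫ := by
          rw [← inner_neg_right]
          congr 1
          abel
        nlinarith [hmaxnorm i' k, norm_nonneg u]
      have hψlow : ∀ k l : Fin N, ψ0 ≤ ψ (x k t) (x l t) := fun k l =>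
        hψ0le _ _ (hball k t ht0') (hball l t ht0')
      obtain ⟨I, hI⟩ : ∃ I : ℝ, I = ⟪u, u⟫ := ⟨_, rfl⟩
      have hInn' : (0:ℝ) ≤ I := by rw [hI]; exact real_inner_self_nonneg
      have hIρ : I = ρ t ^ 2 := by rw [hI]; exact huu
      obtain ⟨S1, hS1⟩ : ∃ S1 : ℝ,
        S1 = ∑ k ∈ Finset.univ.filter (fun k => k ≠ i'), ⟪u, x k t - x i' t⟫ := ⟨_, rfl⟩
      obtain ⟨S2, hS2⟩ : ∃ S2 : ℝ,
        S2 = ∑ k ∈ Finset.univ.filter (fun k => k ≠ j'), ⟪u, x k t - x j' t⟫ := ⟨_, rfl⟩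
      obtain ⟨W1, hW1d⟩ : ∃ W1 : ℝ, W1 = ∑ k ∈ Finset.univ.filter (fun k => k ≠ i'),
        ψ (x i' t) (x k t) * ⟪u, x k t - x i' t⟫ := ⟨_, rfl⟩
      obtain ⟨W2, hW2d⟩ : ∃ W2 : ℝ, W2 = ∑ k ∈ Finset.univ.filter (fun k => k ≠ j'),
        ψ (x j' t) (x k t) * ⟪u, x k t - x j' t⟫ := ⟨_, rfl⟩
      have hW1 : W1 ≤ ψ0 * S1 := by
        rw [hW1d, hS1, Finset.mul_sum]
        refine Finset.sum_le_sum fun k _ => ?_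
        exact mul_le_mul_of_nonpos_right (hψlow i' k) (hneg k)
      have hW2 : ψ0 * S2 ≤ W2 := by
        rw [hW2d, hS2, Finset.mul_sum]
        refine Finset.sum_le_sum fun k _ => ?_
        exact mul_le_mul_of_nonneg_right (hψlow j' k) (hpos k)
      have hSdiff : S1 - S2 = -(N:ℝ) * I := by
        rw [hS1, hS2, hI]
        have e1 : (∑ k ∈ Finset.univ.filter (fun k => k ≠ i'), ⟪u, x k t - x i' t⟫)
            = ∑ k : Fin N, ⟪u, x k t - x i' t⟫ := by
          rw [Finset.filter_ne', Finset.sum_erase_eq_sub (Finset.mem_univ i')]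
          simp
        have e2 : (∑ k ∈ Finset.univ.filter (fun k => k ≠ j'), ⟪u, x k t - x j' t⟫)
            = ∑ k : Fin N, ⟪u, x k t - x j' t⟫ := by
          rw [Finset.filter_ne', Finset.sum_erase_eq_sub (Finset.mem_univ j')]
          simp
        rw [e1, e2, ← Finset.sum_sub_distrib]
        have e3 : ∀ k : Fin N, ⟪u, x k t - x i' t⟫ - ⟪u, x k t - x j' t⟫ = -⟪u, u⟫ := by
          intro k
          rw [← inner_sub_right, ← inner_neg_right]
          congr 1
          rw [hu]
          abel
        rw [Finset.sum_congr rfl fun k _ => e3 k]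
        simp [Finset.card_univ, mul_comm]
      have hcnn : 0 ≤ α t / ((N:ℝ) - 1) := div_nonneg (hα0 t) hNpos.le
      have hexp : ⟪u, v i' t - v j' t⟫ = (α t / ((N:ℝ) - 1)) * (W1 - W2) := by
        rw [hW1d, hW2d, inner_sub_right, hinner_v u i' t, hinner_v u j' t]
        ring
      have hvdiff : ⟪u, v i' t - v j' t⟫ ≤ -(α t * ψ0) * I := by
        rw [hexp]
        have hmul : ψ0 * S1 - ψ0 * S2 = ψ0 * (-(N:ℝ) * I) := by rw [← mul_sub, hSdiff]
        have hd : W1 - W2 ≤ ψ0 * (-(N:ℝ) * I) := by linarith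
        have h1 : (α t / ((N:ℝ) - 1)) * (W1 - W2)
            ≤ (α t / ((N:ℝ) - 1)) * (ψ0 * (-(N:ℝ) * I)) := mul_le_mul_of_nonneg_left hd hcnn
        have hcN : (α t / ((N:ℝ) - 1)) * (N:ℝ) = α t + α t / ((N:ℝ) - 1) := by
          field_simp
          ring
        have h2 : (α t / ((N:ℝ) - 1)) * (ψ0 * (-(N:ℝ) * I))
            = -(α t * ψ0) * I - (α t / ((N:ℝ) - 1)) * ψ0 * I := by
          linear_combination (-(ψ0 * I)) * hcN
        have h3 : 0 ≤ (α t / ((N:ℝ) - 1)) * ψ0 * I :=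
          mul_nonneg (mul_nonneg hcnn hψ0pos.le) hInn'
        linarith
      -- conclude the strict derivative inequality
      have hg'eq : g' (i', j') t = 2 * ⟪u, v i' t - v j' t⟫ := by
        simp only [hg'def, ← hu]
        rw [real_inner_comm (v i' t - v j' t) u]
        ring
      have hg'le : g' (i', j') t ≤ 2 * (-(α t * ψ0) * ρ t ^ 2) := by
        rw [hg'eq]
        have := hvdiff
        rw [hIρ] at this
        linarith
      have hrho' : ρ' t + α t * ψ0 * ρ t = ε * Real.exp (t - a) * (1 + α t * ψ0) := by
        simp only [hρdef, hρ'def]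
        ring
      have h7 : 0 < ε * Real.exp (t - a) * (1 + α t * ψ0) :=
        mul_pos (mul_pos hε (Real.exp_pos _))
          (lt_of_lt_of_le one_pos (le_add_of_nonneg_right (mul_nonneg (hα0 t) hψ0pos.le)))
      have hB'eq : B' t = 2 * ρ t * ρ' t := by simp only [hB'def]
      rw [hB'eq]
      have h11 : 2 * ρ t * ρ' t = 2 * ρ t * (ε * Real.exp (t - a) * (1 + α t * ψ0))
          - 2 * (α t * ψ0) * ρ t ^ 2 := by
        linear_combination (2 * ρ t) * hrho'
      have h12 := mul_pos hρtpos h7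
      linarith [hg'le, h11, h12]
    have hfence := fence_finite_max g g' B B' hgderiv hBderiv hinit hkey b
      (Set.right_mem_Icc.2 hab.le) (i, j)
    have hρb : 0 < ρ b := hρpos b
    have hnorm2 : ‖x i b - x j b‖ ^ 2 ≤ ρ b ^ 2 := by
      have := hfence
      simp only [hgdef, hBdef, real_inner_self_eq_norm_sq] at this
      exact this
    have hnorm : ‖x i b - x j b‖ ≤ ρ b :=
      le_of_pow_le_pow_left₀ two_ne_zero hρb.le hnorm2
    have hρbval : ρ b = Real.exp (-(ψ0 * A b)) * dτ + δ := by
      simp only [hρdef, hεdef]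
      rw [div_mul_cancel₀ _ hexpba.ne']
    rwa [hρbval] at hnorm
  -- conclude
  refine hdiam_le b (C * dτ) fun i j => ?_
  calc ‖x i b - x j b‖ ≤ Real.exp (-(ψ0 * A b)) * dτ := hpairb i j
    _ ≤ Real.exp (-(ψ0 * abar)) * dτ := by
        apply mul_le_mul_of_nonneg_right _ hdτ0
        apply Real.exp_le_exp.2
        nlinarith
    _ ≤ C * dτ := mul_le_mul_of_nonneg_right hCmain hdτ0
end

section
/- Under the persistence condition (WF) on the weight α (existence of T > 0 and times t_n with t_n − t_{n−1} ≤ T and ∫_{t_{n−1}}^{t_n} α ≥ ᾱ > 0), every solution of the undelayed weighted Hegselmann-Krause system converges exponentially to consensus: there exists γ > 0, independent of N, such that d(t) ≤ d(0) e^{−γ(t−T)} for all t ≥ 0. -/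
open scoped RealInnerProductSpace
open Filter Set Topology

lemma eventually_slope_sup'_lt {ι : Type*} {s : Finset ι} (hs : s.Nonempty)
    {g : ι → ℝ → ℝ} {g' : ι → ℝ} {x r : ℝ}
    (hg : ∀ p ∈ s, HasDerivAt (g p) (g' p) x)
    (hr : ∀ p ∈ s, g p x = s.sup' hs (fun q => g q x) → g' p < r) :
    ∀ᶠ z in 𝓝[>] x, slope (fun t => s.sup' hs (fun q => g q t)) x z < r := by
  set f : ℝ → ℝ := fun t => s.sup' hs (fun q => g q t) with hf
  have key : ∀ p ∈ s, ∀ᶠ z in 𝓝[>] x, g p z < f x + r * (z - x) := by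
    intro p hp
    rcases eq_or_lt_of_le (Finset.le_sup' (fun q => g q x) hp : g p x ≤ f x) with h | h
    · have hd : g' p < r := hr p hp h
      have ht : Tendsto (slope (g p) x) (𝓝[>] x) (𝓝 (g' p)) :=
        ((hasDerivAt_iff_tendsto_slope).1 (hg p hp)).mono_left
          (nhdsWithin_mono x (fun z hz => ne_of_gt hz))
      have h1 : ∀ᶠ z in 𝓝[>] x, slope (g p) x z < r := ht.eventually (eventually_lt_nhds hd)
      filter_upwards [h1, self_mem_nhdsWithin] with z hz1 hz2
      have hzx : (0:ℝ) < z - x := sub_pos.2 hz2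
      rw [slope_def_field, div_lt_iff₀ hzx] at hz1
      have : g p z - g p x < r * (z - x) := by nlinarith [hz1]
      linarith [h]
    · have h1 : ContinuousAt (fun z => g p z - r * (z - x)) x :=
        (hg p hp).continuousAt.sub
          ((continuous_const.mul (continuous_id.sub continuous_const)).continuousAt)
      have h2 : Tendsto (fun z => g p z - r * (z - x)) (𝓝 x) (𝓝 (g p x)) := by
        have := h1.tendsto; simpa using this
      have h3 : ∀ᶠ z in 𝓝 x, g p z - r * (z - x) < f x :=
        h2.eventually (eventually_lt_nhds h)
      filter_upwards [nhdsWithin_le_nhds h3] with z hz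
      linarith
  have hall : ∀ᶠ z in 𝓝[>] x, ∀ p ∈ s, g p z < f x + r * (z - x) :=
    (Filter.eventually_all_finset s).2 key
  filter_upwards [hall, self_mem_nhdsWithin] with z hz1 hz2
  have hzx : (0:ℝ) < z - x := sub_pos.2 hz2
  have hfz : f z < f x + r * (z - x) := (Finset.sup'_lt_iff hs).2 hz1
  rw [slope_def_field, div_lt_iff₀ hzx]
  nlinarith [hfz]

lemma sup'_le_of_deriv {ι : Type*} {s : Finset ι} (hs : s.Nonempty)
    (g : ι → ℝ → ℝ) (g' : ι → ℝ → ℝ) {b : ℝ}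
    (hg : ∀ p ∈ s, ∀ t, 0 ≤ t → HasDerivAt (g p) (g' p t) t)
    {f' B B' : ℝ → ℝ}
    (hf' : ∀ t, 0 ≤ t → ∀ p ∈ s, g p t = s.sup' hs (fun q => g q t) → g' p t ≤ f' t)
    (hB : ∀ t, HasDerivAt B (B' t) t)
    (ha : s.sup' hs (fun q => g q 0) ≤ B 0)
    (hbound : ∀ t, 0 ≤ t → s.sup' hs (fun q => g q t) = B t → f' t < B' t) :
    ∀ t ∈ Set.Icc (0:ℝ) b, s.sup' hs (fun q => g q t) ≤ B t := by
  intro t ht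
  have hcont : ContinuousOn (fun t => s.sup' hs (fun q => g q t)) (Set.Icc 0 b) :=
    ContinuousOn.finset_sup'_apply hs fun p hp =>
      fun u hu => ((hg p hp u hu.1).continuousAt).continuousWithinAt
  have hslope : ∀ u ∈ Set.Ico (0:ℝ) b, ∀ r, f' u < r →
      ∃ᶠ z in nhdsWithin u (Set.Ioi u), slope (fun t => s.sup' hs (fun q => g q t)) u z < r := by
    intro u hu r hru
    exact (eventually_slope_sup'_lt hs (fun p hp => hg p hp u hu.1)
      (fun p hp hpe => lt_of_le_of_lt (hf' u hu.1 p hp hpe) hru)).frequently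
  exact image_le_of_liminf_slope_right_lt_deriv_boundary hcont hslope ha hB
    (fun u hu => hbound u hu.1) ht

set_option maxHeartbeats 1000000 in
/-- exponential convergence to consensus for the undelayed weighted
Hegselmann-Krause system under the persistence condition (WF). -/
theorem hk_exponential_consensus
    {dim N : ℕ} (hN : 2 ≤ N)
    (ψ : EuclideanSpace ℝ (Fin dim) → EuclideanSpace ℝ (Fin dim) → ℝ)
    (hψpos : ∀ y z, 0 < ψ y z)
    (hψbdd : ∃ K, ∀ y z, ψ y z ≤ K)
    (hψcont : Continuous fun p : EuclideanSpace ℝ (Fin dim) × EuclideanSpace ℝ (Fin dim) => ψ p.1 p.2)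
    (α : ℝ → ℝ) (hαcont : Continuous α) (hα01 : ∀ t, α t ∈ Set.Icc (0:ℝ) 1)
    (x : Fin N → ℝ → EuclideanSpace ℝ (Fin dim))
    (hode : ∀ i t, 0 ≤ t → HasDerivAt (x i)
      ((α t / ((N : ℝ) - 1)) •
        ∑ j ∈ Finset.univ.filter (fun j => j ≠ i),
          ψ (x i t) (x j t) • (x j t - x i t)) t)
    (T abar : ℝ) (hT : 0 < T) (habar : 0 < abar)
    (tseq : ℕ → ℝ) (ht0 : tseq 0 = 0) (htmono : StrictMono tseq)
    (hgap : ∀ n : ℕ, tseq (n + 1) - tseq n ≤ T)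
    (hint : ∀ n : ℕ, abar ≤ ∫ t in (tseq n)..(tseq (n + 1)), α t)
    (diam : ℝ → ℝ) (hdiam : ∀ t, diam t = ⨆ i, ⨆ j, ‖x i t - x j t‖) :
    ∃ γ : ℝ, 0 < γ ∧ ∀ t : ℝ, 0 ≤ t → diam t ≤ diam 0 * Real.exp (-γ * (t - T)) := by
  classical
  haveI : Nonempty (Fin N) := ⟨⟨0, by omega⟩⟩
  have hN1 : (0:ℝ) < (N:ℝ) - 1 := by
    have h2 : (2:ℝ) ≤ (N:ℝ) := by exact_mod_cast hN
    linarith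
  set v : Fin N → ℝ → EuclideanSpace ℝ (Fin dim) := fun i t =>
    (α t / ((N : ℝ) - 1)) • ∑ j ∈ Finset.univ.filter (fun j => j ≠ i),
      ψ (x i t) (x j t) • (x j t - x i t) with hv
  have hode' : ∀ i t, 0 ≤ t → HasDerivAt (x i) (v i t) t := hode
  have hvinner : ∀ (w : EuclideanSpace ℝ (Fin dim)) i t, ⟪w, v i t⟫ =
      (α t / ((N:ℝ)-1)) * ∑ j ∈ Finset.univ.filter (fun j => j ≠ i),
        ψ (x i t) (x j t) * ⟪w, x j t - x i t⟫ := by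
    intro w i t
    simp only [hv, inner_smul_right, inner_sum, real_inner_smul_right]
  -- Part 1: ball invariance
  have huniv : (Finset.univ : Finset (Fin N)).Nonempty := Finset.univ_nonempty
  set Q : ℝ → ℝ := fun t => Finset.univ.sup' huniv (fun i => ⟪x i t, x i t⟫) with hQdef
  have hQd : ∀ i ∈ (Finset.univ : Finset (Fin N)), ∀ t, 0 ≤ t →
      HasDerivAt (fun u => ⟪x i u, x i u⟫) (2 * ⟪x i t, v i t⟫) t := by
    intro i _ t ht
    have := (hode' i t ht).inner ℝ (hode' i t ht)
    refine this.congr_deriv ?_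
    rw [real_inner_comm (v i t) (x i t)]; ring
  have hQderiv_le : ∀ t, 0 ≤ t → ∀ i ∈ (Finset.univ : Finset (Fin N)),
      ⟪x i t, x i t⟫ = Q t → 2 * ⟪x i t, v i t⟫ ≤ (0:ℝ) := by
    intro t ht i _ hiQ
    have hsum : ∑ j ∈ Finset.univ.filter (fun j => j ≠ i),
        ψ (x i t) (x j t) * ⟪x i t, x j t - x i t⟫ ≤ 0 := by
      apply Finset.sum_nonpos
      intro j _
      have h1 : ⟪x i t, x j t - x i t⟫ ≤ 0 := by
        have hj : ⟪x j t, x j t⟫ ≤ ⟪x i t, x i t⟫ := by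
          rw [hiQ]; exact Finset.le_sup' (fun k => ⟪x k t, x k t⟫) (Finset.mem_univ j)
        have h2 : ⟪x i t, x j t⟫ ≤ ‖x i t‖ * ‖x j t‖ := real_inner_le_norm _ _
        have h3 : ⟪x j t, x j t⟫ = ‖x j t‖^2 := real_inner_self_eq_norm_sq _
        have h4 : ⟪x i t, x i t⟫ = ‖x i t‖^2 := real_inner_self_eq_norm_sq _
        rw [inner_sub_right]
        nlinarith [norm_nonneg (x i t), norm_nonneg (x j t)]
      have := mul_le_mul_of_nonneg_left h1 (hψpos (x i t) (x j t)).le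
      simpa using this
    have hα : 0 ≤ α t / ((N:ℝ)-1) := div_nonneg (hα01 t).1 hN1.le
    have := mul_nonpos_of_nonneg_of_nonpos hα hsum
    rw [hvinner]
    linarith [this]
  have hQle : ∀ t, 0 ≤ t → Q t ≤ Q 0 := by
    intro t ht
    have hεbound : ∀ ε : ℝ, 0 < ε → Q t ≤ Q 0 + ε * (t + 1) := by
      intro ε hε
      have hB : ∀ s : ℝ, HasDerivAt (fun u => Q 0 + ε * (u + 1)) ε s := by
        intro s
        simpa using (((hasDerivAt_id s).add_const 1).const_mul ε).const_add (Q 0)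
      have := sup'_le_of_deriv (b := t) huniv _ _ hQd
        (f' := fun _ => 0) (fun u hu i hi hie => hQderiv_le u hu i hi hie) hB
        (by show Q 0 ≤ Q 0 + ε * (0+1); linarith) (fun u _ _ => hε) t ⟨ht, le_refl t⟩
      exact this
    refine le_of_forall_pos_le_add ?_
    intro δ hδ
    have h1 : (0:ℝ) < t + 1 := by linarith
    have := hεbound (δ / (t+1)) (by positivity)
    calc Q t ≤ Q 0 + δ / (t+1) * (t+1) := this
      _ = Q 0 + δ := by field_simp
  set R : ℝ := Real.sqrt (Q 0) with hR
  have hball : ∀ t, 0 ≤ t → ∀ i, ‖x i t‖ ≤ R := by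
    intro t ht i
    have h1 : ⟪x i t, x i t⟫ ≤ Q 0 :=
      le_trans (Finset.le_sup' (fun k => ⟪x k t, x k t⟫) (Finset.mem_univ i)) (hQle t ht)
    rw [real_inner_self_eq_norm_sq] at h1
    calc ‖x i t‖ = Real.sqrt (‖x i t‖^2) := (Real.sqrt_sq (norm_nonneg _)).symm
      _ ≤ R := Real.sqrt_le_sqrt h1
  have hR0 : 0 ≤ R := Real.sqrt_nonneg _
  -- Part 2: minimum of ψ on the invariant ball
  obtain ⟨p0, hp0K, hp0min⟩ :=
    ((isCompact_closedBall (0:EuclideanSpace ℝ (Fin dim)) R).prod (isCompact_closedBall (0:EuclideanSpace ℝ (Fin dim)) R)).exists_isMinOn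
      ⟨((0:EuclideanSpace ℝ (Fin dim)),(0:EuclideanSpace ℝ (Fin dim))), Set.mk_mem_prod (Metric.mem_closedBall_self hR0)
        (Metric.mem_closedBall_self hR0)⟩ hψcont.continuousOn
  set ψ0 : ℝ := ψ p0.1 p0.2 with hψ0
  have hψ0pos : 0 < ψ0 := hψpos _ _
  have hψ0le : ∀ y z : EuclideanSpace ℝ (Fin dim), ‖y‖ ≤ R → ‖z‖ ≤ R → ψ0 ≤ ψ y z := by
    intro y z hy hz
    exact hp0min (Set.mk_mem_prod (mem_closedBall_zero_iff.2 hy)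
      (mem_closedBall_zero_iff.2 hz))
  -- Part 3: decay of squared diameter
  set c : ℝ := 2 * ψ0 / ((N:ℝ) - 1) with hc
  have hcpos : 0 < c := by positivity
  set A : ℝ → ℝ := fun t => ∫ s in (0:ℝ)..t, α s with hA
  have hAd : ∀ t, HasDerivAt A (α t) t := by
    intro t
    exact intervalIntegral.integral_hasDerivAt_right (hαcont.intervalIntegrable _ _)
      hαcont.stronglyMeasurable.stronglyMeasurableAtFilter hαcont.continuousAt
  have hA0 : A 0 = 0 := intervalIntegral.integral_same
  have hpuniv : (Finset.univ : Finset (Fin N × Fin N)).Nonempty := Finset.univ_nonempty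
  set g : Fin N × Fin N → ℝ → ℝ :=
    fun p t => ⟪x p.1 t - x p.2 t, x p.1 t - x p.2 t⟫ with hgdef
  set F : ℝ → ℝ := fun t => Finset.univ.sup' hpuniv (fun q => g q t) with hFdef
  have hgd : ∀ p ∈ (Finset.univ : Finset (Fin N × Fin N)), ∀ t, 0 ≤ t →
      HasDerivAt (g p) (2 * ⟪x p.1 t - x p.2 t, v p.1 t - v p.2 t⟫) t := by
    intro p _ t ht
    have := ((hode' p.1 t ht).sub (hode' p.2 t ht)).inner ℝ
      ((hode' p.1 t ht).sub (hode' p.2 t ht))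
    refine this.congr_deriv ?_
    simp only [Pi.sub_apply]
    rw [real_inner_comm (v p.1 t - v p.2 t) (x p.1 t - x p.2 t)]; ring
  have hgF : ∀ p t, g p t ≤ F t := fun p t => Finset.le_sup' (fun q => g q t) (Finset.mem_univ p)
  have hFnonneg : ∀ t, 0 ≤ F t := by
    intro t
    have := hgF (Classical.arbitrary (Fin N), Classical.arbitrary (Fin N)) t
    simpa [hgdef] using this
  have hkey : ∀ t, 0 ≤ t → ∀ p ∈ (Finset.univ : Finset (Fin N × Fin N)), g p t = F t →
      2 * ⟪x p.1 t - x p.2 t, v p.1 t - v p.2 t⟫ ≤ -(c * α t * F t) := by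
    intro t ht p _ hpF
    rcases eq_or_ne p.1 p.2 with heq | hne
    · have hw : x p.1 t - x p.2 t = 0 := by rw [heq, sub_self]
      have hF0 : F t = 0 := by
        rw [← hpF, hgdef]; simp [hw]
      rw [hw, hF0]
      simp
    · -- the key one-sided estimate
      have half : ∀ (i j : Fin N), i ≠ j → ⟪x i t - x j t, x i t - x j t⟫ = F t →
          ⟪x i t - x j t, v i t⟫ ≤ (α t / ((N:ℝ)-1)) * (-(ψ0 * F t)) := by
        intro i j hij hijF
        have hα : 0 ≤ α t / ((N:ℝ)-1) := div_nonneg (hα01 t).1 hN1.le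
        rw [hvinner]
        refine mul_le_mul_of_nonneg_left ?_ hα
        -- bound the sum by the j-th term
        have hjmem : j ∈ Finset.univ.filter (fun k => k ≠ i) := by
          simp [Ne.symm hij]
        have hterm : ∀ k ∈ Finset.univ.filter (fun k => k ≠ i),
            ψ (x i t) (x k t) * ⟪x i t - x j t, x k t - x i t⟫ ≤ 0 := by
          intro k _
          have h1 : ⟪x i t - x j t, x k t - x i t⟫ ≤ 0 := by
            have he : x k t - x i t = (x k t - x j t) - (x i t - x j t) := by abel
            rw [he, inner_sub_right]
            have h2 : ⟪x i t - x j t, x k t - x j t⟫ ≤ ‖x i t - x j t‖ * ‖x k t - x j t‖ :=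
              real_inner_le_norm _ _
            have h3 : ‖x k t - x j t‖^2 ≤ ‖x i t - x j t‖^2 := by
              have := hgF (k, j) t
              rw [hgdef] at this
              simp only at this
              rw [real_inner_self_eq_norm_sq] at this
              rw [← hijF, real_inner_self_eq_norm_sq] at this
              exact this
            have h4 : ⟪x i t - x j t, x i t - x j t⟫ = ‖x i t - x j t‖^2 :=
              real_inner_self_eq_norm_sq _
            nlinarith [norm_nonneg (x i t - x j t), norm_nonneg (x k t - x j t)]
          have := mul_le_mul_of_nonneg_left h1 (hψpos (x i t) (x k t)).le
          simpa using this
        have hsplit := Finset.sum_eq_sum_sdiff_singleton_add hjmem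
          (fun k => ψ (x i t) (x k t) * ⟪x i t - x j t, x k t - x i t⟫)
        have hrest : ∑ k ∈ (Finset.univ.filter (fun k => k ≠ i)) \ {j},
            ψ (x i t) (x k t) * ⟪x i t - x j t, x k t - x i t⟫ ≤ 0 := by
          apply Finset.sum_nonpos
          intro k hk
          exact hterm k (Finset.mem_sdiff.1 hk).1
        have hjval : ψ (x i t) (x j t) * ⟪x i t - x j t, x j t - x i t⟫ ≤ -(ψ0 * F t) := by
          have h5 : x j t - x i t = -(x i t - x j t) := by abel
          have h6 : ⟪x i t - x j t, x j t - x i t⟫ = -(F t) := by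
            rw [h5, inner_neg_right, hijF]
          rw [h6]
          have h7 : ψ0 ≤ ψ (x i t) (x j t) :=
            hψ0le _ _ (by
              have := hball t ht i; have := hball t ht j
              exact hball t ht i) (hball t ht j)
          have h8 : 0 ≤ F t := hFnonneg t
          nlinarith
        calc ∑ k ∈ Finset.univ.filter (fun k => k ≠ i),
            ψ (x i t) (x k t) * ⟪x i t - x j t, x k t - x i t⟫
            = (∑ k ∈ (Finset.univ.filter (fun k => k ≠ i)) \ {j},
                ψ (x i t) (x k t) * ⟪x i t - x j t, x k t - x i t⟫)
              + ψ (x i t) (x j t) * ⟪x i t - x j t, x j t - x i t⟫ := hsplit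
          _ ≤ 0 + -(ψ0 * F t) := add_le_add hrest hjval
          _ = -(ψ0 * F t) := by ring
      have h1 := half p.1 p.2 hne hpF
      have hsymF : ⟪x p.2 t - x p.1 t, x p.2 t - x p.1 t⟫ = F t := by
        have : x p.2 t - x p.1 t = -(x p.1 t - x p.2 t) := by abel
        rw [this, inner_neg_neg]
        exact hpF
      have h2 := half p.2 p.1 (Ne.symm hne) hsymF
      have h3 : ⟪x p.1 t - x p.2 t, v p.1 t - v p.2 t⟫
          = ⟪x p.1 t - x p.2 t, v p.1 t⟫ + ⟪x p.2 t - x p.1 t, v p.2 t⟫ := by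
        rw [inner_sub_right]
        have : x p.2 t - x p.1 t = -(x p.1 t - x p.2 t) := by abel
        rw [this, inner_neg_left]
        ring
      have hS : 0 ≤ α t / ((N:ℝ)-1) * (ψ0 * F t) := by
        have := hFnonneg t
        have hα : 0 ≤ α t / ((N:ℝ)-1) := div_nonneg (hα01 t).1 hN1.le
        positivity
      have hNne : ((N:ℝ)-1) ≠ 0 := hN1.ne'
      have hcF : -(c * α t * F t) = 2 * (α t / ((N:ℝ)-1) * (-(ψ0 * F t))) := by
        rw [hc]
        field_simp
      rw [h3, hcF]
      linarith
  have hmain : ∀ t, 0 ≤ t → F t ≤ F 0 * Real.exp (-(c * A t)) := by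
    intro t ht
    have hlim : Tendsto (fun ε : ℝ => (F 0 + ε) * Real.exp (ε * t - c * A t)) (𝓝[>] 0)
        (𝓝 (F 0 * Real.exp (-(c * A t)))) := by
      have hcont : Continuous (fun ε : ℝ => (F 0 + ε) * Real.exp (ε * t - c * A t)) :=
        (continuous_const.add continuous_id).mul
          (Real.continuous_exp.comp ((continuous_id.mul continuous_const).sub continuous_const))
      have h0 := (hcont.tendsto 0).mono_left (nhdsWithin_le_nhds : 𝓝[>] (0:ℝ) ≤ 𝓝 0)
      simpa using h0
    refine ge_of_tendsto hlim ?_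
    filter_upwards [self_mem_nhdsWithin] with ε (hε : 0 < ε)
    set B : ℝ → ℝ := fun u => (F 0 + ε) * Real.exp (ε * u - c * A u) with hBdef
    have hB : ∀ s, HasDerivAt B ((ε - c * α s) * B s) s := by
      intro s
      have h1 : HasDerivAt (fun u => ε * u - c * A u) (ε - c * α s) s := by
        have := ((hasDerivAt_id s).const_mul ε).sub ((hAd s).const_mul c)
        exact this.congr_deriv (by ring)
      have h2 := (h1.exp).const_mul (F 0 + ε)
      refine h2.congr_deriv ?_
      rw [hBdef]; ring
    have hBpos : ∀ u, 0 < B u := by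
      intro u
      have := hFnonneg 0
      have := Real.exp_pos (ε * u - c * A u)
      rw [hBdef]; positivity
    have hres := sup'_le_of_deriv (b := t) hpuniv g
      (fun p t => 2 * ⟪x p.1 t - x p.2 t, v p.1 t - v p.2 t⟫) hgd
      (f' := fun u => -(c * α u * F u)) hkey hB
      (by
        show F 0 ≤ B 0
        rw [hBdef]
        simp only [hA0, mul_zero, sub_zero, Real.exp_zero]
        linarith)
      (by
        intro u hu hFB
        have hFB' : F u = B u := hFB
        show -(c * α u * F u) < (ε - c * α u) * B u
        rw [← hFB']
        have hFpos : 0 < F u := by rw [hFB']; exact hBpos u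
        nlinarith)
      t ⟨ht, le_refl t⟩
    exact hres
  -- Part 4: lower bound on the integral of α
  have hintle : ∀ (a b : ℝ), a ≤ b → (∫ s in a..b, α s) ≤ b - a := by
    intro a b hab
    have h1 : (∫ s in a..b, α s) ≤ ∫ s in a..b, (1:ℝ) :=
      intervalIntegral.integral_mono_on hab (hαcont.intervalIntegrable _ _)
        intervalIntegrable_const (fun s _ => (hα01 s).2)
    simpa using h1
  have hintnonneg : ∀ (a b : ℝ), a ≤ b → 0 ≤ ∫ s in a..b, α s := by
    intro a b hab
    exact intervalIntegral.integral_nonneg hab (fun s _ => (hα01 s).1)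
  have hgapge : ∀ n, abar ≤ tseq (n+1) - tseq n := by
    intro n
    exact le_trans (hint n) (hintle _ _ (htmono (Nat.lt_succ_self n)).le)
  have htlow : ∀ n : ℕ, (n:ℝ) * abar ≤ tseq n := by
    intro n
    induction n with
    | zero => simp [ht0]
    | succ m ih =>
      have := hgapge m
      push_cast
      linarith
  have htup : ∀ n : ℕ, tseq n ≤ (n:ℝ) * T := by
    intro n
    induction n with
    | zero => simp [ht0]
    | succ m ih =>
      have := hgap m
      push_cast
      linarith
  have hAn : ∀ n : ℕ, (n:ℝ) * abar ≤ A (tseq n) := by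
    intro n
    induction n with
    | zero => rw [ht0]; simp [hA0]
    | succ m ih =>
      have hadd : A (tseq m) + (∫ s in (tseq m)..(tseq (m+1)), α s) = A (tseq (m+1)) :=
        intervalIntegral.integral_add_adjacent_intervals
          (hαcont.intervalIntegrable _ _) (hαcont.intervalIntegrable _ _)
      have := hint m
      push_cast
      linarith
  have hAmono : ∀ s t : ℝ, s ≤ t → A s ≤ A t := by
    intro s t hst
    have hadd : A s + (∫ u in s..t, α u) = A t :=
      intervalIntegral.integral_add_adjacent_intervals
        (hαcont.intervalIntegrable _ _) (hαcont.intervalIntegrable _ _)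
    have := hintnonneg s t hst
    linarith
  have hAlow : ∀ t, 0 ≤ t → abar / T * (t - T) ≤ A t := by
    intro t ht
    have hex : ∃ n, t < tseq n := by
      obtain ⟨k, hk⟩ := exists_nat_gt (t / abar)
      refine ⟨k, ?_⟩
      have h1 : t < (k:ℝ) * abar := by
        rw [div_lt_iff₀ habar] at hk
        linarith
      exact lt_of_lt_of_le h1 (htlow k)
    have hne : Nat.find hex ≠ 0 := by
      intro h0
      have := Nat.find_spec hex
      rw [h0, ht0] at this
      linarith
    obtain ⟨m, hm⟩ : ∃ m, Nat.find hex = m + 1 := ⟨Nat.find hex - 1, by omega⟩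
    have hm1 : tseq m ≤ t := by
      by_contra hcon
      push_neg at hcon
      exact absurd hcon (Nat.find_min hex (by omega))
    have hm2 : t < tseq (m+1) := by
      have := Nat.find_spec hex
      rwa [hm] at this
    have h1 : A t ≥ (m:ℝ) * abar := le_trans (hAn m) (hAmono _ _ hm1)
    have h2 : t - T ≤ (m:ℝ) * T := by
      have := htup (m+1)
      push_cast at this
      linarith
    have h3 : abar / T * (t - T) ≤ abar / T * ((m:ℝ) * T) :=
      mul_le_mul_of_nonneg_left h2 (div_nonneg habar.le hT.le)
    have h4 : abar / T * ((m:ℝ) * T) = (m:ℝ) * abar := by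
      field_simp
    linarith
  -- Part 5: assembly
  refine ⟨c * abar / (2 * T), by positivity, ?_⟩
  intro t ht
  have hFt := hmain t ht
  have hub : ∀ i j, ‖x i t - x j t‖ ≤ Real.sqrt (F t) := by
    intro i j
    have h1 : ‖x i t - x j t‖^2 ≤ F t := by
      have := hgF (i, j) t
      rw [hgdef] at this
      simp only at this
      rwa [real_inner_self_eq_norm_sq] at this
    calc ‖x i t - x j t‖ = Real.sqrt (‖x i t - x j t‖^2) := (Real.sqrt_sq (norm_nonneg _)).symm
      _ ≤ Real.sqrt (F t) := Real.sqrt_le_sqrt h1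
  have hdt : diam t ≤ Real.sqrt (F t) := by
    rw [hdiam]
    exact ciSup_le fun i => ciSup_le fun j => hub i j
  have hd0 : Real.sqrt (F 0) ≤ diam 0 := by
    obtain ⟨p, _, hpe⟩ := Finset.exists_mem_eq_sup' hpuniv (fun q => g q 0)
    have h2 : ‖x p.1 0 - x p.2 0‖ ≤ diam 0 := by
      rw [hdiam]
      have hb1 : BddAbove (Set.range fun j => ‖x p.1 0 - x j 0‖) :=
        Set.Finite.bddAbove (Set.finite_range _)
      have hb2 : BddAbove (Set.range fun i => ⨆ j, ‖x i 0 - x j 0‖) :=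
        Set.Finite.bddAbove (Set.finite_range _)
      exact le_trans (le_ciSup hb1 p.2) (le_ciSup hb2 p.1)
    have h3 : F 0 = ‖x p.1 0 - x p.2 0‖^2 := by
      rw [hFdef]
      simp only
      rw [hpe, hgdef]
      exact real_inner_self_eq_norm_sq _
    rw [h3, Real.sqrt_sq (norm_nonneg _)]
    exact h2
  have hd0nonneg : 0 ≤ diam 0 := le_trans (Real.sqrt_nonneg _) hd0
  have hsqrt : Real.sqrt (F 0 * Real.exp (-(c * A t)))
      = Real.sqrt (F 0) * Real.exp (-(c * A t) / 2) := by
    rw [Real.sqrt_mul (hFnonneg 0), Real.exp_half]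
  have hexple : Real.exp (-(c * A t) / 2) ≤ Real.exp (-(c * abar / (2 * T)) * (t - T)) := by
    apply Real.exp_le_exp.2
    have h5 := hAlow t ht
    have h6 : c * (abar / T * (t - T)) ≤ c * A t := mul_le_mul_of_nonneg_left h5 hcpos.le
    have h7 : -(c * abar / (2 * T)) * (t - T) = -(c * (abar / T * (t - T))) / 2 := by
      field_simp
    rw [h7]
    linarith
  calc diam t ≤ Real.sqrt (F t) := hdt
    _ ≤ Real.sqrt (F 0 * Real.exp (-(c * A t))) := Real.sqrt_le_sqrt hFt
    _ = Real.sqrt (F 0) * Real.exp (-(c * A t) / 2) := hsqrt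
    _ ≤ diam 0 * Real.exp (-(c * A t) / 2) :=
        mul_le_mul_of_nonneg_right hd0 (Real.exp_nonneg _)
    _ ≤ diam 0 * Real.exp (-(c * abar / (2 * T)) * (t - T)) :=
        mul_le_mul_of_nonneg_left hexple hd0nonneg
end

section
/- Let x_1,...,x_N solve the delayed weighted Hegselmann-Krause system dx_i/dt = (α(t)/(N−1)) Σ_{j≠i} ψ(x_i(t), x_j(t−τ)) (x_j(t−τ) − x_i(t)) for t > 0 with continuous initial data on [−τ,0], τ > 0. Then for every v ∈ ℝ^d, every S ≥ 0, every t ≥ S − τ and every i, one has min_j min_{s∈[S−τ,S]} ⟨x_j(s),v⟩ ≤ ⟨x_i(t),v⟩ ≤ max_j max_{s∈[S−τ,S]} ⟨x_j(s),v⟩. -/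
open scoped RealInnerProductSpace

lemma barrier_le {g : ℝ → ℝ} {a b : ℝ} (hc : ContinuousOn g (Set.Icc a b))
    (hg : ∀ t ∈ Set.Ioo a b, 0 ≤ g t → ∃ g', HasDerivAt g g' t ∧ g' ≤ 0)
    (ha : g a ≤ 0) : ∀ t ∈ Set.Icc a b, g t ≤ 0 := by
  intro t0 ht0
  by_contra hpos
  push_neg at hpos
  have hat0 : a < t0 := by
    rcases lt_or_eq_of_le ht0.1 with h | h
    · exact h
    · exact absurd ha (by rw [h]; exact not_le.2 hpos)
  set E : Set ℝ := Set.Icc a t0 ∩ g ⁻¹' Set.Iic 0 with hE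
  have hcomp : IsCompact E :=
    IsCompact.of_isClosed_subset isCompact_Icc
      ((hc.mono (Set.Icc_subset_Icc_right ht0.2)).preimage_isClosed_of_isClosed
        isClosed_Icc isClosed_Iic) Set.inter_subset_left
  have hEne : E.Nonempty := ⟨a, ⟨le_refl a, le_of_lt hat0⟩, ha⟩
  set u := sSup E with hu
  have huE : u ∈ E := hcomp.sSup_mem hEne
  have hgu : g u ≤ 0 := huE.2
  have hu_lt : u < t0 := lt_of_le_of_ne huE.1.2
    (fun h => absurd hgu (by rw [h]; exact not_le.2 hpos))
  have hgpos : ∀ s ∈ Set.Ioc u t0, 0 < g s := by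
    intro s hs
    by_contra hle
    push_neg at hle
    have hsE : s ∈ E := ⟨⟨le_trans huE.1.1 hs.1.le, hs.2⟩, hle⟩
    exact absurd (le_csSup hcomp.bddAbove hsE) (not_le.2 hs.1)
  have hderiv : ∀ s ∈ Set.Ioo u t0, ∃ g', HasDerivAt g g' s ∧ g' ≤ 0 := by
    intro s hs
    exact hg s ⟨lt_of_le_of_lt huE.1.1 hs.1, lt_of_lt_of_le hs.2 ht0.2⟩
      (le_of_lt (hgpos s ⟨hs.1, hs.2.le⟩))
  have hanti : AntitoneOn g (Set.Icc u t0) := by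
    apply antitoneOn_of_deriv_nonpos (convex_Icc u t0)
    · exact hc.mono (Set.Icc_subset_Icc huE.1.1 ht0.2)
    · intro s hs
      rw [interior_Icc] at hs
      obtain ⟨g', hg', _⟩ := hderiv s hs
      exact hg'.differentiableAt.differentiableWithinAt
    · intro s hs
      rw [interior_Icc] at hs
      obtain ⟨g', hg', hle⟩ := hderiv s hs
      rw [hg'.deriv]; exact hle
  have := hanti (Set.left_mem_Icc.2 hu_lt.le) (Set.right_mem_Icc.2 hu_lt.le) hu_lt.le
  exact absurd (le_trans this hgu) (not_le.2 hpos)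

lemma real_iInf_neg' {ι : Sort*} (f : ι → ℝ) : (⨅ i, f i) = -⨆ i, -f i := by
  rw [iInf, iSup, Real.sInf_def]
  congr 2
  ext y
  simp only [Set.mem_neg, Set.mem_range]
  constructor
  · rintro ⟨i, hi⟩; exact ⟨i, by rw [hi, neg_neg]⟩
  · rintro ⟨i, hi⟩; exact ⟨i, by rw [← hi, neg_neg]⟩

/-- Upper projection bound for the delayed HK system. -/
lemma hk_upper
    {dim N : ℕ} (hN : 2 ≤ N) (τ : ℝ) (hτ : 0 < τ)
    (ψ : EuclideanSpace ℝ (Fin dim) → EuclideanSpace ℝ (Fin dim) → ℝ)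
    (hψpos : ∀ y z, 0 < ψ y z)
    (α : ℝ → ℝ) (hα01 : ∀ t, α t ∈ Set.Icc (0:ℝ) 1)
    (x : Fin N → ℝ → EuclideanSpace ℝ (Fin dim))
    (hxcont : ∀ i, ContinuousOn (x i) (Set.Ici (-τ)))
    (hode : ∀ i t, 0 < t → HasDerivAt (x i)
      ((α t / ((N : ℝ) - 1)) •
        ∑ j ∈ Finset.univ.filter (fun j => j ≠ i),
          ψ (x i t) (x j (t - τ)) • (x j (t - τ) - x i t)) t)
    (v : EuclideanSpace ℝ (Fin dim)) (S : ℝ) (hS : 0 ≤ S) :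
    ∀ t, S - τ ≤ t → ∀ i,
      ⟪x i t, v⟫ ≤ ⨆ j, ⨆ s : Set.Icc (S - τ) S, ⟪x j (s : ℝ), v⟫ := by
  have hNpos : (0 : ℝ) < (N : ℝ) - 1 := by
    have : (2 : ℝ) ≤ (N : ℝ) := by exact_mod_cast hN
    linarith
  haveI : Nonempty (Fin N) := ⟨⟨0, by omega⟩⟩
  have hIccne : Nonempty (Set.Icc (S - τ) S) :=
    Set.nonempty_Icc_subtype (by linarith)
  set F : Fin N → ℝ → ℝ := fun j s => ⟪x j s, v⟫ with hF
  set M : ℝ := ⨆ j, ⨆ s : Set.Icc (S - τ) S, F j s with hM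
  have hsub : Set.Icc (S - τ) S ⊆ Set.Ici (-τ) := by
    intro s hs; simp only [Set.mem_Ici]; have := hs.1; linarith
  have hFcont : ∀ j (A B : ℝ), -τ ≤ A → ContinuousOn (F j) (Set.Icc A B) := by
    intro j A B hA
    apply ContinuousOn.inner
    · exact (hxcont j).mono (fun s hs => le_trans hA hs.1)
    · exact continuousOn_const
  have hbdd : ∀ j, BddAbove (Set.range fun s : Set.Icc (S - τ) S => F j (s : ℝ)) := by
    intro j
    have : (Set.range fun s : Set.Icc (S - τ) S => F j (s : ℝ))
        = F j '' Set.Icc (S - τ) S := by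
      exact Set.range_restrict (F j) (Set.Icc (S - τ) S)
    rw [this]
    exact (isCompact_Icc.image_of_continuousOn (hFcont j _ _ (by linarith))).bddAbove
  have hbase : ∀ t ∈ Set.Icc (S - τ) S, ∀ j, F j t ≤ M := by
    intro t ht j
    calc F j t ≤ ⨆ s : Set.Icc (S - τ) S, F j (s : ℝ) := le_ciSup (hbdd j) ⟨t, ht⟩
      _ ≤ M := le_ciSup (f := fun j => ⨆ s : Set.Icc (S - τ) S, F j (s : ℝ)) (Set.Finite.bddAbove (Set.finite_range _)) j
  have key : ∀ n : ℕ, ∀ t ∈ Set.Icc (S - τ) (S + n * τ), ∀ i, F i t ≤ M := by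
    intro n
    induction n with
    | zero => simpa using hbase
    | succ n ih =>
      intro t ht i
      by_cases hcase : t ≤ S + n * τ
      · exact ih t ⟨ht.1, hcase⟩ i
      push_neg at hcase
      set a : ℝ := S + n * τ with ha
      have hnτ : (0 : ℝ) ≤ n * τ := mul_nonneg (Nat.cast_nonneg n) hτ.le
      have ha0 : (0 : ℝ) ≤ a := by simp only [ha]; linarith
      have htup : t ≤ S + (n + 1) * τ := by
        have := ht.2; push_cast at this ⊢; linarith
      have hbar : ∀ r ∈ Set.Icc a t, F i r - M ≤ 0 := by
        apply barrier_le
        · exact ((hFcont i a t (by linarith)).sub continuousOn_const)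
        · intro s hs hge
          have hs0 : 0 < s := lt_of_le_of_lt ha0 hs.1
          have hD := (hode i s hs0).inner ℝ (hasDerivAt_const s v)
          refine ⟨_, hD.sub_const M, ?_⟩
          have hprev : ∀ j, F j (s - τ) ≤ M := by
            intro j
            apply ih (s - τ)
            constructor
            · have := hs.1; simp only [ha] at this; linarith
            · have := hs.2; linarith
          have hiM : M ≤ F i s := by linarith [hge]
          rw [inner_zero_right, zero_add, real_inner_smul_left, sum_inner]
          apply mul_nonpos_of_nonneg_of_nonpos
          · exact div_nonneg (hα01 s).1 hNpos.le
          · apply Finset.sum_nonpos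
            intro j _
            rw [real_inner_smul_left, inner_sub_left]
            apply mul_nonpos_of_nonneg_of_nonpos (hψpos _ _).le
            have := hprev j
            simp only [hF] at *
            linarith
        · have haM : F i a ≤ M := ih a ⟨by simp only [ha]; linarith, le_refl a⟩ i
          linarith
      have := hbar t ⟨hcase.le, le_refl t⟩
      linarith
  intro t ht i
  obtain ⟨n, hn⟩ := exists_nat_ge ((t - S) / τ)
  have : t - S ≤ n * τ := by
    rw [div_le_iff₀ hτ] at hn; linarith
  exact key n t ⟨ht, by linarith⟩ i

/-- projection bounds for the delayed weighted Hegselmann-Krause system: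
for t ≥ S - τ the projections stay between the min and max over [S-τ, S]. -/
theorem hk_delay_projection_bounds
    {dim N : ℕ} (hN : 2 ≤ N) (τ : ℝ) (hτ : 0 < τ)
    (ψ : EuclideanSpace ℝ (Fin dim) → EuclideanSpace ℝ (Fin dim) → ℝ)
    (hψpos : ∀ y z, 0 < ψ y z)
    (hψbdd : ∃ K, ∀ y z, ψ y z ≤ K)
    (hψcont : Continuous fun p : EuclideanSpace ℝ (Fin dim) × EuclideanSpace ℝ (Fin dim) => ψ p.1 p.2)
    (α : ℝ → ℝ) (hαcont : Continuous α) (hα01 : ∀ t, α t ∈ Set.Icc (0:ℝ) 1)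
    (x : Fin N → ℝ → EuclideanSpace ℝ (Fin dim))
    (hxcont : ∀ i, ContinuousOn (x i) (Set.Ici (-τ)))
    (hode : ∀ i t, 0 < t → HasDerivAt (x i)
      ((α t / ((N : ℝ) - 1)) •
        ∑ j ∈ Finset.univ.filter (fun j => j ≠ i),
          ψ (x i t) (x j (t - τ)) • (x j (t - τ) - x i t)) t)
    (v : EuclideanSpace ℝ (Fin dim)) (S t : ℝ) (hS : 0 ≤ S) (ht : S - τ ≤ t) (i : Fin N) :
    (⨅ j, ⨅ s : Set.Icc (S - τ) S, ⟪x j (s : ℝ), v⟫) ≤ ⟪x i t, v⟫ ∧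
      ⟪x i t, v⟫ ≤ ⨆ j, ⨆ s : Set.Icc (S - τ) S, ⟪x j (s : ℝ), v⟫ := by
  constructor
  · have h2 := hk_upper hN τ hτ ψ hψpos α hα01 x hxcont hode (-v) S hS t ht i
    simp only [inner_neg_right] at h2
    have hEq : (⨅ j, ⨅ s : Set.Icc (S - τ) S, ⟪x j (s : ℝ), v⟫)
        = -⨆ j, ⨆ s : Set.Icc (S - τ) S, -⟪x j (s : ℝ), v⟫ := by
      rw [real_iInf_neg' (fun j => ⨅ s : Set.Icc (S - τ) S, ⟪x j (s : ℝ), v⟫)]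
      congr 2
      ext j
      rw [real_iInf_neg' (fun s : Set.Icc (S - τ) S => ⟪x j (s : ℝ), v⟫), neg_neg]
    rw [hEq]
    linarith
  · exact hk_upper hN τ hτ ψ hψpos α hα01 x hxcont hode v S hS t ht i
end

section
/- For solutions of the delayed weighted Hegselmann-Krause system, define D_n := max_{i,j} max_{s,t ∈ [t_n−τ, t_n]} |x_i(s) − x_j(t)| for an increasing sequence of times t_n with t_0 = 0. Then for all n, all indices i, j, and all s, t ≥ t_n − τ, one has |x_i(s) − x_j(t)| ≤ D_n; in particular D_{n+1} ≤ D_n for all n. -/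
open scoped RealInnerProductSpace Topology

private lemma hk_barrier {g g' : ℝ → ℝ} {a b : ℝ}
    (hg : ContinuousOn g (Set.Icc a b))
    (hg' : ∀ t ∈ Set.Ico a b, HasDerivAt g (g' t) t)
    (ha : g a < 0)
    (hbound : ∀ t ∈ Set.Ico a b, 0 < g t → g' t ≤ 0) :
    ∀ t ∈ Set.Icc a b, g t ≤ 0 := by
  intro t ht
  have haux : ∀ ε > 0, g t ≤ ε * (t - a + 1) := by
    intro ε hε
    refine image_le_of_deriv_right_lt_deriv_boundary (f := g) (f' := g')
      (B := fun s => ε * (s - a + 1)) (B' := fun _ => ε) hg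
      (fun s hs => (hg' s hs).hasDerivWithinAt) (by show g a ≤ ε * (a - a + 1); nlinarith)
      (fun s => by
        simpa using (((hasDerivAt_id s).sub_const a).add_const 1).const_mul ε) ?_ ht
    intro s hs hcontact
    have h1 : 0 < g s := by rw [hcontact]; show (0:ℝ) < ε * (s - a + 1); nlinarith [hs.1]
    exact lt_of_le_of_lt (hbound s hs h1) hε
  have hpos : (0:ℝ) < t - a + 1 := by linarith [ht.1]
  by_contra hg0
  push_neg at hg0
  have := haux (g t / (2 * (t - a + 1))) (by positivity)
  have h2 : g t / (2 * (t - a + 1)) * (t - a + 1) = g t / 2 := by field_simp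
  rw [h2] at this
  linarith

/-- for the delayed system, the delayed diameter Dₙ bounds all pairwise
distances at times ≥ tₙ - τ; in particular (Dₙ) is nonincreasing. -/
theorem hk_delay_diameter_bound
    {dim N : ℕ} (hN : 2 ≤ N) (τ : ℝ) (hτ : 0 < τ)
    (ψ : EuclideanSpace ℝ (Fin dim) → EuclideanSpace ℝ (Fin dim) → ℝ)
    (hψpos : ∀ y z, 0 < ψ y z)
    (hψbdd : ∃ K, ∀ y z, ψ y z ≤ K)
    (hψcont : Continuous fun p : EuclideanSpace ℝ (Fin dim) × EuclideanSpace ℝ (Fin dim) => ψ p.1 p.2)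
    (α : ℝ → ℝ) (hαcont : Continuous α) (hα01 : ∀ t, α t ∈ Set.Icc (0:ℝ) 1)
    (x : Fin N → ℝ → EuclideanSpace ℝ (Fin dim))
    (hxcont : ∀ i, ContinuousOn (x i) (Set.Ici (-τ)))
    (hode : ∀ i t, 0 < t → HasDerivAt (x i)
      ((α t / ((N : ℝ) - 1)) •
        ∑ j ∈ Finset.univ.filter (fun j => j ≠ i),
          ψ (x i t) (x j (t - τ)) • (x j (t - τ) - x i t)) t)
    (tseq : ℕ → ℝ) (ht0 : tseq 0 = 0) (htmono : StrictMono tseq)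
    (D : ℕ → ℝ)
    (hD : ∀ n, D n = ⨆ i, ⨆ j, ⨆ s : Set.Icc (tseq n - τ) (tseq n),
      ⨆ t : Set.Icc (tseq n - τ) (tseq n), ‖x i (s : ℝ) - x j (t : ℝ)‖)
    :
    (∀ (n : ℕ) (i j : Fin N) (s t : ℝ), tseq n - τ ≤ s → tseq n - τ ≤ t →
      ‖x i s - x j t‖ ≤ D n) ∧ ∀ n : ℕ, D (n + 1) ≤ D n := by
  have hN1 : (1:ℝ) ≤ (N:ℝ) - 1 := by
    have : (2:ℝ) ≤ (N:ℝ) := by exact_mod_cast hN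
    linarith
  haveI hNE : Nonempty (Fin N) := ⟨⟨0, by omega⟩⟩
  have main : ∀ (n : ℕ) (i j : Fin N) (s t : ℝ), tseq n - τ ≤ s → tseq n - τ ≤ t →
      ‖x i s - x j t‖ ≤ D n := by
    intro n
    set a0 := tseq n - τ with ha0
    set b0 := tseq n with hb0
    have htn0 : 0 ≤ b0 := by rw [hb0, ← ht0]; exact htmono.monotone (Nat.zero_le n)
    have ha0b0 : a0 ≤ b0 := by rw [ha0]; linarith
    have hIccsub : Set.Icc a0 b0 ⊆ Set.Ici (-τ) := fun z hz => le_trans (by simp [ha0]; linarith) hz.1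
    set S := ⋃ j : Fin N, x j '' Set.Icc a0 b0 with hS
    have hScomp : IsCompact S :=
      isCompact_iUnion fun j => isCompact_Icc.image_of_continuousOn ((hxcont j).mono hIccsub)
    set C := closure (convexHull ℝ S) with hC
    have hCconv : Convex ℝ C := (convex_convexHull ℝ S).closure
    have hCclosed : IsClosed C := isClosed_closure
    have hSC : S ⊆ C := (subset_convexHull ℝ S).trans subset_closure
    have hbase : ∀ (i : Fin N) (t : ℝ), t ∈ Set.Icc a0 b0 → x i t ∈ C :=
      fun i t ht => hSC (Set.mem_iUnion.2 ⟨i, ⟨t, ht, rfl⟩⟩)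
    have key : ∀ (k : ℕ) (i : Fin N) (t : ℝ), t ∈ Set.Icc a0 (b0 + (k:ℝ) * τ) → x i t ∈ C := by
      intro k
      induction k with
      | zero => intro i t ht; exact hbase i t (by simpa using ht)
      | succ k ih =>
        intro i t ht
        by_cases hcase : t ≤ b0 + (k:ℝ) * τ
        · exact ih i t ⟨ht.1, hcase⟩
        push_neg at hcase
        set A := b0 + (k:ℝ) * τ with hA
        have hkτ : 0 ≤ (k:ℝ) * τ := by positivity
        have hA0 : 0 ≤ A := by rw [hA]; linarith
        have htB : t ≤ A + τ := by
          have h2 := ht.2; push_cast at h2; rw [hA]; linarith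
        by_contra hnot
        obtain ⟨f, u, hfu, hux⟩ := geometric_hahn_banach_closed_point hCconv hCclosed hnot
        set g : ℝ → ℝ := fun s => f (x i s) - u with hg
        have hgA : g A < 0 := by
          have := hfu _ (ih i A ⟨by rw [hA, ha0]; linarith, le_refl _⟩)
          simp only [hg]; linarith
        have hsubIci : Set.Icc A t ⊆ Set.Ici (-τ) := fun z hz => le_trans (by linarith) hz.1
        have hgcont : ContinuousOn g (Set.Icc A t) :=
          (f.continuous.comp_continuousOn ((hxcont i).mono hsubIci)).sub continuousOn_const
        -- choose a' ∈ (A, t) with g a' < 0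
        have hAt : A < t := hcase
        haveI hnb : (𝓝[Set.Ioo A t] A).NeBot := by
          apply mem_closure_iff_nhdsWithin_neBot.mp
          rw [closure_Ioo hAt.ne]
          exact ⟨le_refl A, hAt.le⟩
        have htend : Filter.Tendsto g (𝓝[Set.Ioo A t] A) (𝓝 (g A)) :=
          (hgcont A ⟨le_refl _, hAt.le⟩).mono_left (nhdsWithin_mono _ Set.Ioo_subset_Icc_self)
        have hev : ∀ᶠ z in 𝓝[Set.Ioo A t] A, g z < 0 := htend.eventually_lt_const hgA
        obtain ⟨a', hga', ha'mem⟩ := (hev.and eventually_mem_nhdsWithin).exists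
        rw [Set.mem_Ioo] at ha'mem
        -- derivative of g
        set gd : ℝ → ℝ := fun s => (α s / ((N:ℝ) - 1)) *
          ∑ j ∈ Finset.univ.filter (fun j => j ≠ i),
            ψ (x i s) (x j (s - τ)) * (f (x j (s - τ)) - f (x i s)) with hgd
        have hderiv : ∀ s : ℝ, 0 < s → HasDerivAt g (gd s) s := by
          intro s hs
          have h2 := (f.hasFDerivAt.comp_hasDerivAt s (hode i s hs)).sub_const u
          exact h2.congr_deriv (by
            simp [hgd, map_smul, map_sum, map_sub, smul_eq_mul, Finset.mul_sum])
        have hfinal : ∀ z ∈ Set.Icc a' t, g z ≤ 0 := by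
          apply hk_barrier (hgcont.mono (Set.Icc_subset_Icc_left ha'mem.1.le))
          · intro s hs
            exact hderiv s (lt_of_le_of_lt hA0 (lt_of_lt_of_le ha'mem.1 hs.1))
          · exact hga'
          · intro s hs hgs
            have hαs := hα01 s
            have hxjC : ∀ j : Fin N, x j (s - τ) ∈ C := by
              intro j
              apply ih j
              constructor
              · rw [ha0]; have : A ≤ s := le_trans ha'mem.1.le hs.1; rw [hA] at this; linarith
              · have : s ≤ t := hs.2.le; rw [hA]; linarith
            rw [hgd]
            apply mul_nonpos_iff.mpr
            left
            constructor
            · exact div_nonneg hαs.1 (by linarith)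
            · apply Finset.sum_nonpos
              intro j _
              apply mul_nonpos_iff.mpr
              left
              refine ⟨(hψpos _ _).le, ?_⟩
              have h1 : f (x j (s - τ)) < u := hfu _ (hxjC j)
              have h2 : u < f (x i s) := by simp only [hg] at hgs; linarith
              linarith
        have := hfinal t ⟨ha'mem.2.le, le_refl _⟩
        simp only [hg] at this
        linarith
    have memC : ∀ (i : Fin N) (t : ℝ), a0 ≤ t → x i t ∈ C := by
      intro i t hta
      obtain ⟨k, hk⟩ := exists_nat_ge ((t - b0) / τ)
      refine key k i t ⟨hta, ?_⟩
      have := (div_le_iff₀ hτ).1 hk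
      linarith
    -- D n bounds distances of points of S
    obtain ⟨R, hR⟩ := hScomp.isBounded.subset_closedBall 0
    have hbnd : ∀ (i j : Fin N) (s t : ↥(Set.Icc a0 b0)), ‖x i (s:ℝ) - x j (t:ℝ)‖ ≤ R + R := by
      intro i j s t
      have h1 : x i (s:ℝ) ∈ S := Set.mem_iUnion.2 ⟨i, ⟨s, s.2, rfl⟩⟩
      have h2 : x j (t:ℝ) ∈ S := Set.mem_iUnion.2 ⟨j, ⟨t, t.2, rfl⟩⟩
      have := hR h1
      have := hR h2
      rw [Metric.mem_closedBall, dist_zero_right] at *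
      calc ‖x i (s:ℝ) - x j (t:ℝ)‖ ≤ ‖x i (s:ℝ)‖ + ‖x j (t:ℝ)‖ := norm_sub_le _ _
        _ ≤ R + R := by gcongr
    haveI : Nonempty ↥(Set.Icc a0 b0) := ⟨⟨a0, le_refl _, ha0b0⟩⟩
    have le_D : ∀ (i j : Fin N) (s t : ↥(Set.Icc a0 b0)), ‖x i (s:ℝ) - x j (t:ℝ)‖ ≤ D n := by
      intro i j s t
      rw [hD n]
      calc ‖x i (s:ℝ) - x j (t:ℝ)‖
          ≤ ⨆ t : ↥(Set.Icc a0 b0), ‖x i (s:ℝ) - x j (t:ℝ)‖ :=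
            le_ciSup ⟨R + R, by rintro _ ⟨t, rfl⟩; exact hbnd i j s t⟩ t
        _ ≤ ⨆ s : ↥(Set.Icc a0 b0), ⨆ t : ↥(Set.Icc a0 b0), ‖x i (s:ℝ) - x j (t:ℝ)‖ :=
            le_ciSup ⟨R + R, by rintro _ ⟨s, rfl⟩; exact ciSup_le fun t => hbnd i j s t⟩ s
        _ ≤ ⨆ j, ⨆ s : ↥(Set.Icc a0 b0), ⨆ t : ↥(Set.Icc a0 b0), ‖x i (s:ℝ) - x j (t:ℝ)‖ :=
            le_ciSup ⟨R + R, by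
              rintro _ ⟨j, rfl⟩; exact ciSup_le fun s => ciSup_le fun t => hbnd i j s t⟩ j
        _ ≤ ⨆ i, ⨆ j, ⨆ s : ↥(Set.Icc a0 b0), ⨆ t : ↥(Set.Icc a0 b0), ‖x i (s:ℝ) - x j (t:ℝ)‖ :=
            le_ciSup ⟨R + R, by
              rintro _ ⟨i, rfl⟩
              exact ciSup_le fun j => ciSup_le fun s => ciSup_le fun t => hbnd i j s t⟩ i
    have hD0 : 0 ≤ D n := by
      have := le_D (Classical.arbitrary _) (Classical.arbitrary _)
        (Classical.arbitrary _) (Classical.arbitrary _)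
      exact le_trans (norm_nonneg _) this
    have hdiamS : Metric.diam S ≤ D n := by
      apply Metric.diam_le_of_forall_dist_le hD0
      rintro p hp q hq
      obtain ⟨i, pi, hpi, rfl⟩ : ∃ i pi, pi ∈ Set.Icc a0 b0 ∧ x i pi = p := by
        obtain ⟨i, hi⟩ := Set.mem_iUnion.1 hp
        obtain ⟨pi, hpi, rfl⟩ := hi
        exact ⟨i, pi, hpi, rfl⟩
      obtain ⟨j, qj, hqj, rfl⟩ : ∃ j qj, qj ∈ Set.Icc a0 b0 ∧ x j qj = q := by
        obtain ⟨j, hj⟩ := Set.mem_iUnion.1 hq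
        obtain ⟨qj, hqj, rfl⟩ := hj
        exact ⟨j, qj, hqj, rfl⟩
      rw [dist_eq_norm]
      exact le_D i j ⟨pi, hpi⟩ ⟨qj, hqj⟩
    have hCb : Bornology.IsBounded C := (isBounded_convexHull.2 hScomp.isBounded).closure
    intro i j s t hs ht
    calc ‖x i s - x j t‖ = dist (x i s) (x j t) := (dist_eq_norm _ _).symm
      _ ≤ Metric.diam C := Metric.dist_le_diam_of_mem hCb (memC i s hs) (memC j t ht)
      _ = Metric.diam S := by rw [hC, Metric.diam_closure, convexHull_diam]
      _ ≤ D n := hdiamS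
  refine ⟨main, fun n => ?_⟩
  have hmono : tseq n ≤ tseq (n + 1) := (htmono (Nat.lt_succ_self n)).le
  haveI : Nonempty ↥(Set.Icc (tseq (n+1) - τ) (tseq (n+1))) :=
    ⟨⟨tseq (n+1), by constructor <;> linarith⟩⟩
  rw [hD (n+1)]
  apply ciSup_le; intro i
  apply ciSup_le; intro j
  apply ciSup_le; intro s
  apply ciSup_le; intro t
  exact main n i j (s:ℝ) (t:ℝ) (by linarith [s.2.1]) (by linarith [t.2.1])
end

section
/- For solutions of the delayed weighted Hegselmann-Krause system, for all i and all t ≥ −τ one has |x_i(t)| ≤ M̃^0, where M̃^0 := max_i max_{s ∈ [−τ,0]} |x_i(s)|. -/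
open scoped RealInnerProductSpace

/-- uniform bound for the delayed system by the maximal initial norm. -/
theorem hk_delay_uniform_bound
    {dim N : ℕ} (hN : 2 ≤ N) (τ : ℝ) (hτ : 0 < τ)
    (ψ : EuclideanSpace ℝ (Fin dim) → EuclideanSpace ℝ (Fin dim) → ℝ)
    (hψpos : ∀ y z, 0 < ψ y z)
    (hψbdd : ∃ K, ∀ y z, ψ y z ≤ K)
    (hψcont : Continuous fun p : EuclideanSpace ℝ (Fin dim) × EuclideanSpace ℝ (Fin dim) => ψ p.1 p.2)
    (α : ℝ → ℝ) (hαcont : Continuous α) (hα01 : ∀ t, α t ∈ Set.Icc (0:ℝ) 1)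
    (x : Fin N → ℝ → EuclideanSpace ℝ (Fin dim))
    (hxcont : ∀ i, ContinuousOn (x i) (Set.Ici (-τ)))
    (hode : ∀ i t, 0 < t → HasDerivAt (x i)
      ((α t / ((N : ℝ) - 1)) •
        ∑ j ∈ Finset.univ.filter (fun j => j ≠ i),
          ψ (x i t) (x j (t - τ)) • (x j (t - τ) - x i t)) t)
    (M0 : ℝ) (hM0 : M0 = ⨆ i, ⨆ s : Set.Icc (-τ) (0:ℝ), ‖x i (s : ℝ)‖) :
    ∀ (i : Fin N) (t : ℝ), -τ ≤ t → ‖x i t‖ ≤ M0 := by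
  have hN1 : (1:ℝ) ≤ (N:ℝ) - 1 := by
    have : (2:ℝ) ≤ (N:ℝ) := by exact_mod_cast hN
    linarith
  -- the initial bound on [-τ, 0]
  have hinit : ∀ (i : Fin N) (s : ℝ), -τ ≤ s → s ≤ 0 → ‖x i s‖ ≤ M0 := by
    intro i s h1 h2
    have hsub : Set.Icc (-τ) (0:ℝ) ⊆ Set.Ici (-τ) := Set.Icc_subset_Ici_self
    have hbdd : BddAbove (Set.range fun s : Set.Icc (-τ) (0:ℝ) => ‖x i (s : ℝ)‖) := by
      apply BddAbove.mono (t := (fun y => ‖x i y‖) '' Set.Icc (-τ) (0:ℝ))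
      · rintro _ ⟨s, rfl⟩; exact ⟨s, s.2, rfl⟩
      · exact (isCompact_Icc.image_of_continuousOn ((hxcont i).mono hsub).norm).bddAbove
    have h3 : ‖x i s‖ ≤ ⨆ s : Set.Icc (-τ) (0:ℝ), ‖x i (s : ℝ)‖ :=
      le_ciSup hbdd (⟨s, h1, h2⟩ : Set.Icc (-τ) (0:ℝ))
    have h4 : (⨆ s : Set.Icc (-τ) (0:ℝ), ‖x i (s : ℝ)‖) ≤
        ⨆ i, ⨆ s : Set.Icc (-τ) (0:ℝ), ‖x i (s : ℝ)‖ :=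
      le_ciSup (f := fun i : Fin N => ⨆ s : Set.Icc (-τ) (0:ℝ), ‖x i (s : ℝ)‖)
        (Set.Finite.bddAbove (Set.finite_range _)) i
    rw [hM0]; exact h3.trans h4
  have hM0nonneg : 0 ≤ M0 :=
    (norm_nonneg _).trans (hinit ⟨0, by omega⟩ 0 (by linarith) le_rfl)
  -- key step lemma
  have key : ∀ a : ℝ, 0 ≤ a → (∀ (j : Fin N) (s : ℝ), -τ ≤ s → s ≤ a → ‖x j s‖ ≤ M0) →
      ∀ (i : Fin N) (t : ℝ), a < t → t ≤ a + τ → ‖x i t‖ ≤ M0 := by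
    intro a ha hbnd i t hat hta
    set v : ℝ → EuclideanSpace ℝ (Fin dim) := fun s =>
      (α s / ((N : ℝ) - 1)) •
        ∑ j ∈ Finset.univ.filter (fun j => j ≠ i),
          ψ (x i s) (x j (s - τ)) • (x j (s - τ) - x i s) with hv
    have hg' : ∀ s : ℝ, 0 < s →
        HasDerivWithinAt (fun s => ‖x i s‖ ^ 2) (2 * ⟪x i s, v s⟫) (Set.Ici s) s := by
      intro s hs
      have h1 := HasDerivAt.inner ℝ (hode i s hs) (hode i s hs)
      have h2 : HasDerivAt (fun s => ‖x i s‖ ^ 2) (⟪x i s, v s⟫ + ⟪v s, x i s⟫) s := by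
        simpa only [real_inner_self_eq_norm_sq] using h1
      have h3 : ⟪x i s, v s⟫ + ⟪v s, x i s⟫ = 2 * ⟪x i s, v s⟫ := by
        rw [real_inner_comm (v s) (x i s)]; ring
      rw [h3] at h2
      exact h2.hasDerivWithinAt
    have hεbnd : ∀ ε : ℝ, 0 < ε → ‖x i t‖ ^ 2 ≤ M0 ^ 2 + ε * (1 + (t - a)) := by
      intro ε hε
      -- choose δ slightly above a with ‖x i δ‖² ≤ M0² + ε
      have hca : ContinuousAt (fun s => ‖x i s‖ ^ 2) a := by
        have : ContinuousAt (x i) a :=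
          (hxcont i).continuousAt (Ici_mem_nhds (by linarith))
        exact this.norm.pow 2
      have hlt : ‖x i a‖ ^ 2 < M0 ^ 2 + ε := by
        have := hbnd i a (by linarith) le_rfl
        nlinarith [norm_nonneg (x i a)]
      have hev : ∀ᶠ s in nhds a, ‖x i s‖ ^ 2 < M0 ^ 2 + ε :=
        hca.eventually_lt continuousAt_const hlt
      have hev2 : ∀ᶠ s in nhdsWithin a (Set.Ioi a), ‖x i s‖ ^ 2 < M0 ^ 2 + ε :=
        hev.filter_mono nhdsWithin_le_nhds
      have hev3 : ∀ᶠ s in nhdsWithin a (Set.Ioi a), s ∈ Set.Ioc a t :=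
        Ioc_mem_nhdsGT_of_mem ⟨le_rfl, hat⟩
      obtain ⟨δ, hδ1, hδ2⟩ := (hev2.and hev3).exists
      obtain ⟨hδa, hδt⟩ := hδ2
      have hδpos : 0 < δ := lt_of_le_of_lt ha hδa
      -- Gronwall fencing on [δ, t]
      have main : ∀ ⦃s : ℝ⦄, s ∈ Set.Icc δ t →
          ‖x i s‖ ^ 2 ≤ M0 ^ 2 + ε + ε * (s - δ) := by
        apply image_le_of_deriv_right_lt_deriv_boundary' (a := δ) (b := t)
          (f := fun s => ‖x i s‖ ^ 2) (f' := fun s => 2 * ⟪x i s, v s⟫)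
          (B := fun s => M0 ^ 2 + ε + ε * (s - δ)) (B' := fun _ => ε)
        case hf =>
          apply (ContinuousOn.mono (hxcont i) ?_).norm.pow 2
          intro y hy
          have h1 : δ ≤ y := hy.1
          simp only [Set.mem_Ici]
          linarith
        case hf' =>
          intro s hs
          exact hg' s (lt_of_lt_of_le hδpos hs.1)
        case ha => simpa using hδ1.le
        case hB => fun_prop
        case hB' =>
          intro s _
          have : HasDerivAt (fun s : ℝ => M0 ^ 2 + ε + ε * (s - δ)) ε s := by
            have := (((hasDerivAt_id s).sub_const δ).const_mul ε).const_add (M0 ^ 2 + ε)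
            simpa using this
          exact this.hasDerivWithinAt
        case bound =>
          intro s hs heq
          have hsδ : δ ≤ s := hs.1
          have hst : s < t := hs.2
          have hM0le : M0 ≤ ‖x i s‖ := by
            have h1 : M0 ^ 2 ≤ ‖x i s‖ ^ 2 := by nlinarith
            nlinarith [norm_nonneg (x i s)]
          have hnonpos : ⟪x i s, v s⟫ ≤ 0 := by
            rw [hv]
            simp only [real_inner_smul_right, inner_sum]
            apply mul_nonpos_of_nonneg_of_nonpos
            · exact div_nonneg (hα01 s).1 (by linarith)
            · apply Finset.sum_nonpos
              intro j _
              apply mul_nonpos_of_nonneg_of_nonpos (hψpos _ _).le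
              rw [inner_sub_right, real_inner_self_eq_norm_sq]
              have hb : ‖x j (s - τ)‖ ≤ M0 := by
                apply hbnd j (s - τ) (by linarith)
                linarith
              have := real_inner_le_norm (x i s) (x j (s - τ))
              nlinarith [norm_nonneg (x i s), norm_nonneg (x j (s - τ))]
          linarith
      have := main (Set.right_mem_Icc.2 hδt)
      have hδa' : a ≤ δ := hδa.le
      nlinarith
    -- conclude
    have hsq : ‖x i t‖ ^ 2 ≤ M0 ^ 2 := by
      apply le_of_forall_pos_le_add
      intro ε' hε'
      have hpos : 0 < 1 + (t - a) := by linarith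
      have := hεbnd (ε' / (1 + (t - a))) (div_pos hε' hpos)
      have h2 : ε' / (1 + (t - a)) * (1 + (t - a)) = ε' := by field_simp
      linarith
    nlinarith [norm_nonneg (x i t)]
  -- induction over windows of length τ
  have hind : ∀ n : ℕ, ∀ (j : Fin N) (s : ℝ), -τ ≤ s → s ≤ n * τ → ‖x j s‖ ≤ M0 := by
    intro n
    induction n with
    | zero => intro j s h1 h2; exact hinit j s h1 (by simpa using h2)
    | succ n ih =>
      intro j s h1 h2
      rcases le_or_gt s ((n : ℝ) * τ) with h | h
      · exact ih j s h1 h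
      · refine key ((n : ℝ) * τ) (by positivity) ih j s h ?_
        push_cast at h2
        linarith
  intro i t ht
  obtain ⟨n, hn⟩ := exists_nat_ge (t / τ)
  exact hind n i t ht ((div_le_iff₀ hτ).mp hn)
end

section
/- For the delayed weighted Hegselmann-Krause system, assume the persistence condition (WF): ∫_{t_{n−1}}^{t_n} α(t) dt ≥ ᾱ > 0 and τ ≤ t_n − t_{n−1} ≤ T for all n. Then there exists C ∈ (0,1), independent of N, namely C = max{1 − e^{−K(T+τ)}, 1 − ψ̃_0 e^{−KT} ᾱ}, such that d(t_n) ≤ C · D_{n−2} for all n ≥ 2. -/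
open scoped RealInnerProductSpace

/-- If `f` is continuous on `[p,q]` and at every interior point has some nonnegative
derivative, then `f p ≤ f q`. -/
lemma mono_from_deriv {f : ℝ → ℝ} {p q : ℝ} (hpq : p ≤ q)
    (hc : ContinuousOn f (Set.Icc p q))
    (hd : ∀ t ∈ Set.Ioo p q, ∃ d, HasDerivAt f d t ∧ 0 ≤ d) :
    f p ≤ f q := by
  rcases eq_or_lt_of_le hpq with rfl | hlt
  · exact le_refl _
  have hmono : MonotoneOn f (Set.Icc p q) := by
    apply monotoneOn_of_deriv_nonneg (convex_Icc p q) hc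
    · intro t ht
      rw [interior_Icc] at ht
      exact ((hd t ht).choose_spec.1.differentiableAt).differentiableWithinAt
    · intro t ht
      rw [interior_Icc] at ht
      obtain ⟨d, hdd, h0⟩ := hd t ht
      rw [hdd.deriv]; exact h0
  exact hmono (Set.left_mem_Icc.2 hpq) (Set.right_mem_Icc.2 hpq) hpq

/-- Viability: if `h p ≥ 0` and wherever `h ≤ 0` in the interior the derivative is
nonnegative, then `h` stays nonnegative on `[p,q]`. -/
lemma viability {h : ℝ → ℝ} {p q : ℝ}
    (hc : ContinuousOn h (Set.Icc p q))
    (hd : ∀ t ∈ Set.Ioo p q, h t ≤ 0 → ∃ d, HasDerivAt h d t ∧ 0 ≤ d)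
    (hp : 0 ≤ h p) : ∀ t ∈ Set.Icc p q, 0 ≤ h t := by
  intro t2 ht2
  by_contra hneg
  push_neg at hneg
  have hpt2 : p ≤ t2 := ht2.1
  set S : Set ℝ := {t | t ∈ Set.Icc p t2 ∧ 0 ≤ h t} with hS
  have hSne : S.Nonempty := ⟨p, ⟨le_refl p, hpt2⟩, hp⟩
  have hSbdd : BddAbove S := ⟨t2, fun t ht => ht.1.2⟩
  have hsub : Set.Icc p t2 ⊆ Set.Icc p q := Set.Icc_subset_Icc le_rfl ht2.2
  have hSclosed : IsClosed S := by
    have hEq : S = Set.Icc p t2 ∩ h ⁻¹' Set.Ici 0 := by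
      ext t; simp [hS, Set.mem_inter_iff, and_comm, Set.mem_preimage, Set.mem_Ici]
    rw [hEq]
    exact ContinuousOn.preimage_isClosed_of_isClosed (hc.mono hsub) isClosed_Icc isClosed_Ici
  set t1 := sSup S with ht1def
  have ht1S : t1 ∈ S := hSclosed.csSup_mem hSne hSbdd
  have ht1t2 : t1 ≤ t2 := ht1S.1.2
  have ht1lt : t1 < t2 := by
    rcases eq_or_lt_of_le ht1t2 with heq | hlt2
    · rw [heq] at ht1S; exact absurd ht1S.2 (not_le.2 hneg)
    · exact hlt2
  have hneg' : ∀ t ∈ Set.Ioc t1 t2, h t < 0 := by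
    intro t ht
    by_contra hge
    push_neg at hge
    have htS : t ∈ S := ⟨⟨ht1S.1.1.trans ht.1.le, ht.2⟩, hge⟩
    exact absurd (le_csSup hSbdd htS) (not_le.2 ht.1)
  have hsub2 : Set.Icc t1 t2 ⊆ Set.Icc p q := Set.Icc_subset_Icc ht1S.1.1 ht2.2
  have hmono : h t1 ≤ h t2 := by
    apply mono_from_deriv ht1t2 (hc.mono hsub2)
    intro t ht
    have htpq : t ∈ Set.Ioo p q :=
      ⟨lt_of_le_of_lt ht1S.1.1 ht.1, lt_of_lt_of_le ht.2 ht2.2⟩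
    exact hd t htpq (hneg' t ⟨ht.1, ht.2.le⟩).le
  linarith [ht1S.2]

set_option maxHeartbeats 2000000 in
/-- two-step contraction d(tₙ) ≤ C D_{n-2} for the delayed system under
the persistence condition (WF), with C = max {1 - e^{-K(T+τ)}, 1 - ψ̃₀ e^{-KT} ᾱ}. -/
theorem hk_delay_contraction
    {dim N : ℕ} (hN : 2 ≤ N) (τ : ℝ) (hτ : 0 < τ)
    (ψ : EuclideanSpace ℝ (Fin dim) → EuclideanSpace ℝ (Fin dim) → ℝ)
    (hψpos : ∀ y z, 0 < ψ y z)
    (hψbdd : ∃ K, ∀ y z, ψ y z ≤ K)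
    (hψcont : Continuous fun p : EuclideanSpace ℝ (Fin dim) × EuclideanSpace ℝ (Fin dim) => ψ p.1 p.2)
    (α : ℝ → ℝ) (hαcont : Continuous α) (hα01 : ∀ t, α t ∈ Set.Icc (0:ℝ) 1)
    (x : Fin N → ℝ → EuclideanSpace ℝ (Fin dim))
    (hxcont : ∀ i, ContinuousOn (x i) (Set.Ici (-τ)))
    (hode : ∀ i t, 0 < t → HasDerivAt (x i)
      ((α t / ((N : ℝ) - 1)) •
        ∑ j ∈ Finset.univ.filter (fun j => j ≠ i),
          ψ (x i t) (x j (t - τ)) • (x j (t - τ) - x i t)) t)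
    (K : ℝ) (hK : ∀ y z, ψ y z ≤ K)
    (T abar : ℝ) (hT : 0 < T) (habar : 0 < abar)
    (tseq : ℕ → ℝ) (ht0 : tseq 0 = 0) (htmono : StrictMono tseq)
    (hgap : ∀ n : ℕ, τ ≤ tseq (n + 1) - tseq n ∧ tseq (n + 1) - tseq n ≤ T)
    (hint : ∀ n : ℕ, abar ≤ ∫ t in (tseq n)..(tseq (n + 1)), α t)
    (M0 : ℝ) (hM0 : M0 = ⨆ i, ⨆ s : Set.Icc (-τ) (0:ℝ), ‖x i (s : ℝ)‖)
    (ψ0 : ℝ)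
    (hψ0 : ψ0 = sInf {r : ℝ | ∃ y z : EuclideanSpace ℝ (Fin dim),
      ‖y‖ ≤ M0 ∧ ‖z‖ ≤ M0 ∧ ψ y z = r})
    (diam : ℝ → ℝ) (hdiam : ∀ t, diam t = ⨆ i, ⨆ j, ‖x i t - x j t‖)
    (D : ℕ → ℝ)
    (hD : ∀ n, D n = ⨆ i, ⨆ j, ⨆ s : Set.Icc (tseq n - τ) (tseq n),
      ⨆ t : Set.Icc (tseq n - τ) (tseq n), ‖x i (s : ℝ) - x j (t : ℝ)‖)
    (C : ℝ)
    (hC : C = max (1 - Real.exp (-K * (T + τ))) (1 - ψ0 * Real.exp (-K * T) * abar)) :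
    C ∈ Set.Ioo (0:ℝ) 1 ∧ ∀ n : ℕ, 2 ≤ n → diam (tseq n) ≤ C * D (n - 2) := by
  haveI : Nonempty (Fin N) := ⟨⟨0, by omega⟩⟩
  have hNR : (0:ℝ) < (N:ℝ) - 1 := by
    have h2 : (2:ℝ) ≤ (N:ℝ) := by exact_mod_cast hN
    linarith
  have hKpos : 0 < K := lt_of_lt_of_le (hψpos 0 0) (hK 0 0)
  have hψnn : ∀ y z, 0 ≤ ψ y z := fun y z => (hψpos y z).le
  have hα0 : ∀ t, 0 ≤ α t := fun t => (hα01 t).1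
  have hα1 : ∀ t, α t ≤ 1 := fun t => (hα01 t).2
  have htnn : ∀ n, 0 ≤ tseq n := by
    intro n
    rw [← ht0]
    exact htmono.monotone (Nat.zero_le n)
  -- M0 bounds the initial data
  have hM0mem : ∀ (i : Fin N), ∀ s ∈ Set.Icc (-τ) (0:ℝ), ‖x i s‖ ≤ M0 := by
    intro i s hs
    have hbdd : BddAbove (Set.range fun s : Set.Icc (-τ) (0:ℝ) => ‖x i (s:ℝ)‖) := by
      obtain ⟨Cb, hCb⟩ := (isCompact_Icc (a := -τ) (b := (0:ℝ))).exists_bound_of_continuousOn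
        ((hxcont i).mono (fun z hz => Set.mem_Ici.2 (le_trans (by linarith) hz.1)))
      exact ⟨Cb, by rintro r ⟨s, rfl⟩; exact hCb (s : ℝ) s.2⟩
    have h1 : ‖x i s‖ ≤ ⨆ s : Set.Icc (-τ) (0:ℝ), ‖x i (s:ℝ)‖ := le_ciSup hbdd ⟨s, hs⟩
    have h2 : (⨆ s : Set.Icc (-τ) (0:ℝ), ‖x i (s:ℝ)‖)
        ≤ ⨆ i, ⨆ s : Set.Icc (-τ) (0:ℝ), ‖x i (s:ℝ)‖ :=
      le_ciSup (f := fun i => ⨆ s : Set.Icc (-τ) (0:ℝ), ‖x i (s:ℝ)‖)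
        (Finite.bddAbove_range _) i
    rw [hM0]
    exact h1.trans h2
  have hM0nn : 0 ≤ M0 :=
    le_trans (norm_nonneg _) (hM0mem ⟨0, by omega⟩ 0 ⟨by linarith, le_refl 0⟩)
  -- ψ0 facts
  have hSψeq : {r : ℝ | ∃ y z : EuclideanSpace ℝ (Fin dim), ‖y‖ ≤ M0 ∧ ‖z‖ ≤ M0 ∧ ψ y z = r}
      = (fun p : EuclideanSpace ℝ (Fin dim) × EuclideanSpace ℝ (Fin dim) => ψ p.1 p.2) ''
        (Metric.closedBall 0 M0 ×ˢ Metric.closedBall 0 M0) := by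
    ext r
    constructor
    · rintro ⟨y, z, hy, hz, rfl⟩
      exact ⟨(y, z), ⟨by simpa using hy, by simpa using hz⟩, rfl⟩
    · rintro ⟨⟨y, z⟩, ⟨hy, hz⟩, rfl⟩
      exact ⟨y, z, by simpa using hy, by simpa using hz, rfl⟩
  have hScomp : IsCompact ((fun p : EuclideanSpace ℝ (Fin dim) × EuclideanSpace ℝ (Fin dim) => ψ p.1 p.2) ''
      (Metric.closedBall 0 M0 ×ˢ Metric.closedBall 0 M0)) :=
    ((isCompact_closedBall _ _).prod (isCompact_closedBall _ _)).image_of_continuousOn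
      hψcont.continuousOn
  have hSne : ((fun p : EuclideanSpace ℝ (Fin dim) × EuclideanSpace ℝ (Fin dim) => ψ p.1 p.2) ''
      (Metric.closedBall 0 M0 ×ˢ Metric.closedBall 0 M0)).Nonempty :=
    ⟨ψ 0 0, ⟨(0, 0), ⟨by simpa using hM0nn, by simpa using hM0nn⟩, rfl⟩⟩
  have hψ0mem : ψ0 ∈ {r : ℝ | ∃ y z : EuclideanSpace ℝ (Fin dim),
      ‖y‖ ≤ M0 ∧ ‖z‖ ≤ M0 ∧ ψ y z = r} := by
    rw [hψ0, hSψeq]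
    exact hScomp.sInf_mem hSne
  have hψ0pos : 0 < ψ0 := by
    obtain ⟨y, z, -, -, hyz⟩ := hψ0mem
    rw [← hyz]; exact hψpos y z
  have hψ0le : ∀ y z : EuclideanSpace ℝ (Fin dim), ‖y‖ ≤ M0 → ‖z‖ ≤ M0 → ψ0 ≤ ψ y z := by
    intro y z hy hz
    rw [hψ0]
    exact csInf_le ⟨0, by rintro r ⟨y', z', -, -, rfl⟩; exact (hψpos y' z').le⟩ ⟨y, z, hy, hz, rfl⟩
  -- C ∈ (0,1)
  have hexp1lt : Real.exp (-K * (T + τ)) < 1 := by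
    rw [← Real.exp_zero]
    apply Real.exp_lt_exp.2
    have := mul_pos hKpos (show (0:ℝ) < T + τ by linarith)
    linarith
  have hCpos : 0 < C := by
    rw [hC]
    exact lt_max_of_lt_left (by linarith)
  have hClt1 : C < 1 := by
    rw [hC]
    apply max_lt
    · have := Real.exp_pos (-K * (T + τ)); linarith
    · have := mul_pos (mul_pos hψ0pos (Real.exp_pos (-K * T))) habar
      linarith
  refine ⟨⟨hCpos, hClt1⟩, ?_⟩
  -- derivative of projections
  have hyd : ∀ (w : EuclideanSpace ℝ (Fin dim)) (k0 : Fin N) (t : ℝ), 0 < t →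
      HasDerivAt (fun s => (inner ℝ w (x k0 s) : ℝ))
        ((α t / ((N : ℝ) - 1)) * ∑ l ∈ Finset.univ.filter (fun l => l ≠ k0),
          ψ (x k0 t) (x l (t - τ)) * ((inner ℝ w (x l (t - τ)) : ℝ) - (inner ℝ w (x k0 t) : ℝ))) t := by
    intro w k0 t ht
    have h0 := (innerSL ℝ w).hasFDerivAt.comp_hasDerivAt t (hode k0 t ht)
    simp [Function.comp, inner_smul_right, inner_sum, inner_sub_right, Finset.mul_sum] at h0 ⊢
    exact h0
  have hinnercont : ∀ w : EuclideanSpace ℝ (Fin dim),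
      Continuous fun z : EuclideanSpace ℝ (Fin dim) => (inner ℝ w z : ℝ) :=
    fun w => continuous_const.inner continuous_id
  -- invariance of half-spaces
  have inv : ∀ (w : EuclideanSpace ℝ (Fin dim)) (t₀ B : ℝ), 0 ≤ t₀ →
      (∀ (k0 : Fin N), ∀ s ∈ Set.Icc (t₀ - τ) t₀, (inner ℝ w (x k0 s) : ℝ) ≤ B) →
      ∀ (k0 : Fin N) (t : ℝ), t₀ ≤ t → (inner ℝ w (x k0 t) : ℝ) ≤ B := by
    intro w t₀ B ht₀ hwin
    have step : ∀ u : ℝ, t₀ ≤ u →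
        (∀ (k0 : Fin N), ∀ s ∈ Set.Icc (t₀ - τ) u, (inner ℝ w (x k0 s) : ℝ) ≤ B) →
        ∀ (k0 : Fin N), ∀ s ∈ Set.Icc (t₀ - τ) (u + τ), (inner ℝ w (x k0 s) : ℝ) ≤ B := by
      intro u hu hbnd k0 s hs
      rcases le_or_gt s u with hsu | hsu
      · exact hbnd k0 s ⟨hs.1, hsu⟩
      · have hclaim : ∀ t ∈ Set.Icc u (u + τ), 0 ≤ B - (inner ℝ w (x k0 t) : ℝ) := by
          apply viability
          · apply continuousOn_const.sub
            exact (hinnercont w).comp_continuousOn ((hxcont k0).mono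
              (fun z hz => Set.mem_Ici.2 (by
                have := hz.1
                linarith)))
          · intro t htIoo hneg
            have ht0 : (0:ℝ) < t := lt_of_le_of_lt (le_trans ht₀ hu) htIoo.1
            refine ⟨_, (hyd w k0 t ht0).const_sub B, ?_⟩
            rw [neg_nonneg]
            apply mul_nonpos_of_nonneg_of_nonpos (div_nonneg (hα0 t) hNR.le)
            apply Finset.sum_nonpos
            intro l hl
            apply mul_nonpos_of_nonneg_of_nonpos (hψnn _ _)
            have hlB : (inner ℝ w (x l (t - τ)) : ℝ) ≤ B :=
              hbnd l (t - τ) ⟨by linarith [htIoo.1], by linarith [htIoo.2]⟩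
            linarith [hneg]
          · have := hbnd k0 u ⟨by linarith, le_rfl⟩
            linarith
        have := hclaim s ⟨hsu.le, hs.2⟩
        linarith
    have iter : ∀ m : ℕ, ∀ (k0 : Fin N), ∀ s ∈ Set.Icc (t₀ - τ) (t₀ + m * τ),
        (inner ℝ w (x k0 s) : ℝ) ≤ B := by
      intro m
      induction m with
      | zero =>
        intro k0 s hs
        exact hwin k0 s (by simpa using hs)
      | succ m ih =>
        have hstep := step (t₀ + m * τ)
          (le_add_of_nonneg_right (mul_nonneg (Nat.cast_nonneg m) hτ.le)) ih
        intro k0 s hs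
        apply hstep k0 s
        refine ⟨hs.1, ?_⟩
        have h2 := hs.2
        push_cast at h2
        linarith
    intro k0 t ht
    obtain ⟨m, hm⟩ := exists_nat_ge ((t - t₀) / τ)
    have hmt : t ≤ t₀ + m * τ := by
      rw [div_le_iff₀ hτ] at hm
      linarith
    exact iter m k0 t ⟨by linarith, hmt⟩
  -- norm invariance
  have hnormbd : ∀ (k0 : Fin N) (t : ℝ), -τ ≤ t → ‖x k0 t‖ ≤ M0 := by
    intro k0 t ht
    rcases le_or_gt t 0 with h0 | h0
    · exact hM0mem k0 t ⟨ht, h0⟩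
    by_cases hz : x k0 t = 0
    · rw [hz, norm_zero]; exact hM0nn
    have hwin0 : ∀ (l : Fin N), ∀ s ∈ Set.Icc ((0:ℝ) - τ) (0:ℝ),
        (inner ℝ (‖x k0 t‖⁻¹ • x k0 t) (x l s) : ℝ) ≤ M0 := by
      intro l s hs
      have h1 : (inner ℝ (‖x k0 t‖⁻¹ • x k0 t) (x l s) : ℝ) ≤ ‖‖x k0 t‖⁻¹ • x k0 t‖ * ‖x l s‖ :=
        real_inner_le_norm _ _
      have hv1 : ‖‖x k0 t‖⁻¹ • x k0 t‖ = 1 := by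
        rw [norm_smul]; simp [norm_ne_zero_iff.2 hz]
      rw [hv1, one_mul] at h1
      exact h1.trans (hM0mem l s ⟨by linarith [hs.1], hs.2⟩)
    have hres := inv (‖x k0 t‖⁻¹ • x k0 t) 0 M0 le_rfl hwin0 k0 t h0.le
    rwa [real_inner_smul_left, real_inner_self_eq_norm_mul_norm, ← mul_assoc,
      inv_mul_cancel₀ (norm_ne_zero_iff.2 hz), one_mul] at hres
  have hψ0x : ∀ (k0 l : Fin N) (t : ℝ), 0 ≤ t → ψ0 ≤ ψ (x k0 t) (x l (t - τ)) := by
    intro k0 l t ht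
    exact hψ0le _ _ (hnormbd k0 t (by linarith)) (hnormbd l (t - τ) (by linarith))
  -- main estimate
  intro n hn
  obtain ⟨k, rfl⟩ : ∃ k, n = k + 2 := ⟨n - 2, by omega⟩
  have hkk : k + 2 - 2 = k := by omega
  rw [hkk]
  -- time arithmetic
  have ha0 : 0 ≤ tseq k := htnn k
  have hb1 : τ ≤ tseq (k+1) - tseq k := (hgap k).1
  have hb2 : tseq (k+1) - tseq k ≤ T := (hgap k).2
  have hc1 : τ ≤ tseq (k+2) - tseq (k+1) := (hgap (k+1)).1
  have hc2 : tseq (k+2) - tseq (k+1) ≤ T := (hgap (k+1)).2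
  have hintbc : abar ≤ ∫ t in (tseq (k+1))..(tseq (k+2)), α t := hint (k+1)
  have hwsub : Set.Icc (tseq k - τ) (tseq k) ⊆ Set.Ici (-τ) := by
    intro z hz
    simp only [Set.mem_Icc] at hz
    exact Set.mem_Ici.2 (by linarith [hz.1])
  -- D k dominates window differences
  have hDk : ∀ (i' j' : Fin N) (s t' : ℝ), s ∈ Set.Icc (tseq k - τ) (tseq k) →
      t' ∈ Set.Icc (tseq k - τ) (tseq k) → ‖x i' s - x j' t'‖ ≤ D k := by
    intro i' j' s t' hs ht'
    haveI : Nonempty (Set.Icc (tseq k - τ) (tseq k)) :=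
      ⟨⟨tseq k, by constructor <;> [linarith; exact le_rfl]⟩⟩
    have hbdd1 : ∀ (i'' j'' : Fin N) (s'' : ℝ),
        BddAbove (Set.range fun t'' : Set.Icc (tseq k - τ) (tseq k) => ‖x i'' s'' - x j'' (t'':ℝ)‖) := by
      intro i'' j'' s''
      refine ⟨‖x i'' s''‖ + M0, ?_⟩
      rintro r ⟨t'', rfl⟩
      calc ‖x i'' s'' - x j'' (t'':ℝ)‖ ≤ ‖x i'' s''‖ + ‖x j'' (t'':ℝ)‖ := norm_sub_le _ _
        _ ≤ ‖x i'' s''‖ + M0 := by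
            have := hnormbd j'' (t'':ℝ) (hwsub t''.2)
            linarith
    have hbdd2 : ∀ (i'' j'' : Fin N),
        BddAbove (Set.range fun s'' : Set.Icc (tseq k - τ) (tseq k) =>
          ⨆ t'' : Set.Icc (tseq k - τ) (tseq k), ‖x i'' (s'':ℝ) - x j'' (t'':ℝ)‖) := by
      intro i'' j''
      refine ⟨M0 + M0, ?_⟩
      rintro r ⟨s'', rfl⟩
      apply ciSup_le
      intro t''
      calc ‖x i'' (s'':ℝ) - x j'' (t'':ℝ)‖ ≤ ‖x i'' (s'':ℝ)‖ + ‖x j'' (t'':ℝ)‖ := norm_sub_le _ _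
        _ ≤ M0 + M0 := add_le_add (hnormbd _ _ (hwsub s''.2)) (hnormbd _ _ (hwsub t''.2))
    rw [hD k]
    have h1 : ‖x i' s - x j' t'‖
        ≤ ⨆ t'' : Set.Icc (tseq k - τ) (tseq k), ‖x i' s - x j' (t'':ℝ)‖ :=
      le_ciSup (hbdd1 i' j' s) ⟨t', ht'⟩
    have h2 : (⨆ t'' : Set.Icc (tseq k - τ) (tseq k), ‖x i' s - x j' (t'':ℝ)‖)
        ≤ ⨆ s'' : Set.Icc (tseq k - τ) (tseq k), ⨆ t'' : Set.Icc (tseq k - τ) (tseq k),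
            ‖x i' (s'':ℝ) - x j' (t'':ℝ)‖ :=
      le_ciSup (f := fun s'' : Set.Icc (tseq k - τ) (tseq k) =>
        ⨆ t'' : Set.Icc (tseq k - τ) (tseq k), ‖x i' (s'':ℝ) - x j' (t'':ℝ)‖) (hbdd2 i' j') ⟨s, hs⟩
    have h3 : (⨆ s'' : Set.Icc (tseq k - τ) (tseq k), ⨆ t'' : Set.Icc (tseq k - τ) (tseq k),
            ‖x i' (s'':ℝ) - x j' (t'':ℝ)‖)
        ≤ ⨆ j'', ⨆ s'' : Set.Icc (tseq k - τ) (tseq k), ⨆ t'' : Set.Icc (tseq k - τ) (tseq k),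
            ‖x i' (s'':ℝ) - x j'' (t'':ℝ)‖ :=
      le_ciSup (f := fun j'' => ⨆ s'' : Set.Icc (tseq k - τ) (tseq k),
        ⨆ t'' : Set.Icc (tseq k - τ) (tseq k), ‖x i' (s'':ℝ) - x j'' (t'':ℝ)‖)
        (Finite.bddAbove_range _) j'
    have h4 : (⨆ j'', ⨆ s'' : Set.Icc (tseq k - τ) (tseq k), ⨆ t'' : Set.Icc (tseq k - τ) (tseq k),
            ‖x i' (s'':ℝ) - x j'' (t'':ℝ)‖)
        ≤ ⨆ i'', ⨆ j'', ⨆ s'' : Set.Icc (tseq k - τ) (tseq k), ⨆ t'' : Set.Icc (tseq k - τ) (tseq k),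
            ‖x i'' (s'':ℝ) - x j'' (t'':ℝ)‖ :=
      le_ciSup (f := fun i'' => ⨆ j'', ⨆ s'' : Set.Icc (tseq k - τ) (tseq k),
        ⨆ t'' : Set.Icc (tseq k - τ) (tseq k), ‖x i'' (s'':ℝ) - x j'' (t'':ℝ)‖)
        (Finite.bddAbove_range _) i'
    exact h1.trans (h2.trans (h3.trans h4))
  have hDknn : 0 ≤ D k := by
    have h00 := hDk ⟨0, by omega⟩ ⟨0, by omega⟩ (tseq k) (tseq k)
      ⟨by linarith, le_rfl⟩ ⟨by linarith, le_rfl⟩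
    simpa using h00
  -- diameter attained
  obtain ⟨⟨i, j⟩, hmax⟩ := Finite.exists_max
    (fun p : Fin N × Fin N => ‖x p.1 (tseq (k+2)) - x p.2 (tseq (k+2))‖)
  have hdle : diam (tseq (k+2)) ≤ ‖x i (tseq (k+2)) - x j (tseq (k+2))‖ := by
    rw [hdiam]
    exact ciSup_le fun i' => ciSup_le fun j' => hmax (i', j')
  by_cases hz : x i (tseq (k+2)) - x j (tseq (k+2)) = 0
  · rw [hz, norm_zero] at hdle
    exact hdle.trans (mul_nonneg hCpos.le hDknn)
  have hij : i ≠ j := by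
    rintro rfl
    exact hz (sub_self _)
  set v : EuclideanSpace ℝ (Fin dim) :=
    ‖x i (tseq (k+2)) - x j (tseq (k+2))‖⁻¹ • (x i (tseq (k+2)) - x j (tseq (k+2))) with hvdef
  have hv1 : ‖v‖ = 1 := by
    rw [hvdef, norm_smul]
    simp [norm_ne_zero_iff.2 hz]
  -- extrema of projections over the window at step k
  have Mfacts : ∀ w : EuclideanSpace ℝ (Fin dim),
      ∃ Mw : ℝ, (∃ (k1 : Fin N) (s1 : ℝ), s1 ∈ Set.Icc (tseq k - τ) (tseq k) ∧
        Mw = (inner ℝ w (x k1 s1) : ℝ)) ∧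
        ∀ (k0 : Fin N) (t : ℝ), tseq k - τ ≤ t → (inner ℝ w (x k0 t) : ℝ) ≤ Mw := by
    intro w
    have key : ∀ k0 : Fin N, ∃ Mk : ℝ,
        (∃ s1 : ℝ, s1 ∈ Set.Icc (tseq k - τ) (tseq k) ∧ Mk = (inner ℝ w (x k0 s1) : ℝ)) ∧
        ∀ s ∈ Set.Icc (tseq k - τ) (tseq k), (inner ℝ w (x k0 s) : ℝ) ≤ Mk := by
      intro k0
      have hcomp : IsCompact ((fun s => (inner ℝ w (x k0 s) : ℝ)) '' Set.Icc (tseq k - τ) (tseq k)) :=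
        isCompact_Icc.image_of_continuousOn
          ((hinnercont w).comp_continuousOn ((hxcont k0).mono hwsub))
      have hne' : ((fun s => (inner ℝ w (x k0 s) : ℝ)) '' Set.Icc (tseq k - τ) (tseq k)).Nonempty :=
        ⟨_, ⟨tseq k, ⟨by linarith, le_rfl⟩, rfl⟩⟩
      obtain ⟨s1, hs1, hs1eq⟩ := hcomp.sSup_mem hne'
      exact ⟨_, ⟨s1, hs1, hs1eq.symm⟩, fun s hs => le_csSup hcomp.bddAbove ⟨s, hs, rfl⟩⟩
    choose Mk hMkat hMkbnd using key
    obtain ⟨k1, -, hk1⟩ := Finset.exists_mem_eq_sup' Finset.univ_nonempty Mk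
    obtain ⟨s1, hs1, hs1eq⟩ := hMkat k1
    refine ⟨Finset.univ.sup' Finset.univ_nonempty Mk, ⟨k1, s1, hs1, by rw [hk1, hs1eq]⟩, ?_⟩
    have hwin' : ∀ (k0 : Fin N), ∀ s ∈ Set.Icc (tseq k - τ) (tseq k),
        (inner ℝ w (x k0 s) : ℝ) ≤ Finset.univ.sup' Finset.univ_nonempty Mk :=
      fun k0 s hs => (hMkbnd k0 s hs).trans (Finset.le_sup' Mk (Finset.mem_univ k0))
    intro k0 t ht
    rcases le_or_gt t (tseq k) with hta | hta
    · exact hwin' k0 t ⟨ht, hta⟩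
    · exact inv w (tseq k) _ (htnn k) hwin' k0 t hta.le
  obtain ⟨M, ⟨k1, s1, hs1, hMat⟩, hMglob⟩ := Mfacts v
  obtain ⟨M', ⟨k2, s2, hs2, hM'at⟩, hM'glob⟩ := Mfacts (-v)
  have hmglob : ∀ (k0 : Fin N) (t : ℝ), tseq k - τ ≤ t → -M' ≤ (inner ℝ v (x k0 t) : ℝ) := by
    intro k0 t ht
    have h1 := hM'glob k0 t ht
    rw [inner_neg_left] at h1
    linarith
  have hΔnn : 0 ≤ M + M' := by
    have h1 := hMglob i (tseq k) (by linarith)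
    have h2 := hmglob i (tseq k) (by linarith)
    linarith
  have hΔD : M + M' ≤ D k := by
    have hnv : M + M' = (inner ℝ v (x k1 s1 - x k2 s2) : ℝ) := by
      rw [inner_sub_right, hMat]
      have h1 : M' = -(inner ℝ v (x k2 s2) : ℝ) := by rw [hM'at, inner_neg_left]
      rw [h1]; ring
    rw [hnv]
    calc (inner ℝ v (x k1 s1 - x k2 s2) : ℝ) ≤ ‖v‖ * ‖x k1 s1 - x k2 s2‖ := real_inner_le_norm _ _
      _ = ‖x k1 s1 - x k2 s2‖ := by rw [hv1, one_mul]
      _ ≤ D k := hDk k1 k2 s1 s2 hs1 hs2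
  have hucval : (inner ℝ v (x i (tseq (k+2))) : ℝ) - (inner ℝ v (x j (tseq (k+2))) : ℝ)
      = ‖x i (tseq (k+2)) - x j (tseq (k+2))‖ := by
    rw [← inner_sub_right, hvdef, real_inner_smul_left, real_inner_self_eq_norm_mul_norm,
      ← mul_assoc, inv_mul_cancel₀ (norm_ne_zero_iff.2 hz), one_mul]
  have hsuff : (inner ℝ v (x i (tseq (k+2))) : ℝ) - (inner ℝ v (x j (tseq (k+2))) : ℝ) ≤ C * (M + M') →
      diam (tseq (k+2)) ≤ C * D k := by
    intro h
    calc diam (tseq (k+2)) ≤ ‖x i (tseq (k+2)) - x j (tseq (k+2))‖ := hdle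
      _ = (inner ℝ v (x i (tseq (k+2))) : ℝ) - (inner ℝ v (x j (tseq (k+2))) : ℝ) := hucval.symm
      _ ≤ C * (M + M') := h
      _ ≤ C * D k := mul_le_mul_of_nonneg_left hΔD hCpos.le
  apply hsuff
  -- cardinality fact
  have hcardN : ∀ k0 : Fin N, ((Finset.univ.filter (fun l => l ≠ k0)).card : ℝ) = (N:ℝ) - 1 := by
    intro k0
    rw [Finset.filter_ne' Finset.univ k0, Finset.card_erase_of_mem (Finset.mem_univ k0),
      Finset.card_univ, Fintype.card_fin, Nat.cast_sub (by omega : 1 ≤ N), Nat.cast_one]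
  -- crude bounds
  have hcrudeU : ∀ (k0 : Fin N) (t : ℝ), 0 < t → tseq k ≤ t →
      (α t / ((N:ℝ) - 1)) * ∑ l ∈ Finset.univ.filter (fun l => l ≠ k0),
        ψ (x k0 t) (x l (t - τ)) * ((inner ℝ v (x l (t - τ)) : ℝ) - (inner ℝ v (x k0 t) : ℝ))
      ≤ K * (M - (inner ℝ v (x k0 t) : ℝ)) := by
    intro k0 t ht0' hta
    have hup : (inner ℝ v (x k0 t) : ℝ) ≤ M := hMglob k0 t (by linarith)
    have hsum : ∑ l ∈ Finset.univ.filter (fun l => l ≠ k0),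
        ψ (x k0 t) (x l (t - τ)) * ((inner ℝ v (x l (t - τ)) : ℝ) - (inner ℝ v (x k0 t) : ℝ))
        ≤ ((N:ℝ) - 1) * (K * (M - (inner ℝ v (x k0 t) : ℝ))) := by
      calc ∑ l ∈ Finset.univ.filter (fun l => l ≠ k0),
            ψ (x k0 t) (x l (t - τ)) * ((inner ℝ v (x l (t - τ)) : ℝ) - (inner ℝ v (x k0 t) : ℝ))
          ≤ ∑ _l ∈ Finset.univ.filter (fun l => l ≠ k0), K * (M - (inner ℝ v (x k0 t) : ℝ)) := by
            apply Finset.sum_le_sum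
            intro l _hl
            have hlup : (inner ℝ v (x l (t - τ)) : ℝ) ≤ M := hMglob l (t - τ) (by linarith)
            have h1 : ψ (x k0 t) (x l (t - τ)) * ((inner ℝ v (x l (t - τ)) : ℝ) - (inner ℝ v (x k0 t) : ℝ))
                ≤ ψ (x k0 t) (x l (t - τ)) * (M - (inner ℝ v (x k0 t) : ℝ)) :=
              mul_le_mul_of_nonneg_left (by linarith) (hψnn _ _)
            exact h1.trans (mul_le_mul_of_nonneg_right (hK _ _) (by linarith))
        _ = ((N:ℝ) - 1) * (K * (M - (inner ℝ v (x k0 t) : ℝ))) := by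
            rw [Finset.sum_const, nsmul_eq_mul, hcardN k0]
    have h2 := mul_le_mul_of_nonneg_left hsum (div_nonneg (hα0 t) hNR.le)
    have h3 : (α t / ((N:ℝ)-1)) * (((N:ℝ)-1) * (K * (M - (inner ℝ v (x k0 t) : ℝ))))
        = α t * (K * (M - (inner ℝ v (x k0 t) : ℝ))) := by
      field_simp
    rw [h3] at h2
    have h4 : α t * (K * (M - (inner ℝ v (x k0 t) : ℝ))) ≤ K * (M - (inner ℝ v (x k0 t) : ℝ)) := by
      have h5 : 0 ≤ (1 - α t) * (K * (M - (inner ℝ v (x k0 t) : ℝ))) :=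
        mul_nonneg (by linarith [hα1 t]) (mul_nonneg hKpos.le (by linarith))
      have h6 : (1 - α t) * (K * (M - (inner ℝ v (x k0 t) : ℝ)))
          = K * (M - (inner ℝ v (x k0 t) : ℝ)) - α t * (K * (M - (inner ℝ v (x k0 t) : ℝ))) := by ring
      linarith
    linarith
  have hcrudeL : ∀ (k0 : Fin N) (t : ℝ), 0 < t → tseq k ≤ t →
      K * (-M' - (inner ℝ v (x k0 t) : ℝ)) ≤
      (α t / ((N:ℝ) - 1)) * ∑ l ∈ Finset.univ.filter (fun l => l ≠ k0),
        ψ (x k0 t) (x l (t - τ)) * ((inner ℝ v (x l (t - τ)) : ℝ) - (inner ℝ v (x k0 t) : ℝ)) := by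
    intro k0 t ht0' hta
    have hlo : -M' ≤ (inner ℝ v (x k0 t) : ℝ) := hmglob k0 t (by linarith)
    have hsum : ((N:ℝ) - 1) * (K * (-M' - (inner ℝ v (x k0 t) : ℝ)))
        ≤ ∑ l ∈ Finset.univ.filter (fun l => l ≠ k0),
          ψ (x k0 t) (x l (t - τ)) * ((inner ℝ v (x l (t - τ)) : ℝ) - (inner ℝ v (x k0 t) : ℝ)) := by
      calc ((N:ℝ) - 1) * (K * (-M' - (inner ℝ v (x k0 t) : ℝ)))
          = ∑ _l ∈ Finset.univ.filter (fun l => l ≠ k0), K * (-M' - (inner ℝ v (x k0 t) : ℝ)) := by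
            rw [Finset.sum_const, nsmul_eq_mul, hcardN k0]
        _ ≤ ∑ l ∈ Finset.univ.filter (fun l => l ≠ k0),
            ψ (x k0 t) (x l (t - τ)) * ((inner ℝ v (x l (t - τ)) : ℝ) - (inner ℝ v (x k0 t) : ℝ)) := by
            apply Finset.sum_le_sum
            intro l _hl
            have hllo : -M' ≤ (inner ℝ v (x l (t - τ)) : ℝ) := hmglob l (t - τ) (by linarith)
            have h1 : K * (-M' - (inner ℝ v (x k0 t) : ℝ))
                ≤ ψ (x k0 t) (x l (t - τ)) * (-M' - (inner ℝ v (x k0 t) : ℝ)) :=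
              mul_le_mul_of_nonpos_right (hK _ _) (by linarith)
            exact h1.trans (mul_le_mul_of_nonneg_left (by linarith) (hψnn _ _))
    have h2 := mul_le_mul_of_nonneg_left hsum (div_nonneg (hα0 t) hNR.le)
    have h3 : (α t / ((N:ℝ)-1)) * (((N:ℝ)-1) * (K * (-M' - (inner ℝ v (x k0 t) : ℝ))))
        = α t * (K * (-M' - (inner ℝ v (x k0 t) : ℝ))) := by
      field_simp
    rw [h3] at h2
    have hZ : K * (-M' - (inner ℝ v (x k0 t) : ℝ)) ≤ 0 :=
      mul_nonpos_of_nonneg_of_nonpos hKpos.le (by linarith)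
    have h5 : (1 - α t) * (K * (-M' - (inner ℝ v (x k0 t) : ℝ))) ≤ 0 :=
      mul_nonpos_of_nonneg_of_nonpos (by linarith [hα1 t]) hZ
    have h6 : (1 - α t) * (K * (-M' - (inner ℝ v (x k0 t) : ℝ)))
        = K * (-M' - (inner ℝ v (x k0 t) : ℝ)) - α t * (K * (-M' - (inner ℝ v (x k0 t) : ℝ))) := by
      ring
    linarith
  by_cases hcase : ∃ s ∈ Set.Icc (tseq (k+1) - τ) (tseq (k+2) - τ),
      (inner ℝ v (x i s) : ℝ) - (inner ℝ v (x j s) : ℝ) ≤ 0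
  · -- Case 1: the pair gap closed at some time; persistence of the gap deficit
    obtain ⟨sb, hsb, husb⟩ := hcase
    have hsb0 : 0 ≤ sb := by
      have := hsb.1
      linarith [hb1, ha0]
    have hsbc : sb ≤ tseq (k+2) := by
      have := hsb.2
      linarith
    have hcontW : ContinuousOn (fun t => Real.exp (K * t) *
        ((M + M') - ((inner ℝ v (x i t) : ℝ) - (inner ℝ v (x j t) : ℝ))))
        (Set.Icc sb (tseq (k+2))) := by
      apply ContinuousOn.mul
      · exact (Real.continuous_exp.comp (continuous_const.mul continuous_id)).continuousOn
      · apply continuousOn_const.sub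
        apply ContinuousOn.sub
        · exact (hinnercont v).comp_continuousOn ((hxcont i).mono (fun z hz => by
            simp only [Set.mem_Icc] at hz
            exact Set.mem_Ici.2 (by linarith [hz.1])))
        · exact (hinnercont v).comp_continuousOn ((hxcont j).mono (fun z hz => by
            simp only [Set.mem_Icc] at hz
            exact Set.mem_Ici.2 (by linarith [hz.1])))
    have hderW : ∀ t ∈ Set.Ioo sb (tseq (k+2)), ∃ d,
        HasDerivAt (fun t => Real.exp (K * t) *
          ((M + M') - ((inner ℝ v (x i t) : ℝ) - (inner ℝ v (x j t) : ℝ)))) d t ∧ 0 ≤ d := by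
      intro t htIoo
      have ht0' : 0 < t := lt_of_le_of_lt hsb0 htIoo.1
      have hta : tseq k ≤ t := by
        have h1 := hsb.1
        have h2 := htIoo.1
        linarith [hb1]
      have Hi := hyd v i t ht0'
      have Hj := hyd v j t ht0'
      set Ri := α t / ((N:ℝ) - 1) * ∑ l ∈ Finset.univ.filter (fun l => l ≠ i),
        ψ (x i t) (x l (t - τ)) * ((inner ℝ v (x l (t - τ)) : ℝ) - (inner ℝ v (x i t) : ℝ)) with hRidef
      set Rj := α t / ((N:ℝ) - 1) * ∑ l ∈ Finset.univ.filter (fun l => l ≠ j),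
        ψ (x j t) (x l (t - τ)) * ((inner ℝ v (x l (t - τ)) : ℝ) - (inner ℝ v (x j t) : ℝ)) with hRjdef
      have He : HasDerivAt (fun u => Real.exp (K * u)) (K * Real.exp (K * t)) t := by
        simpa [mul_comm] using ((hasDerivAt_id t).const_mul K).exp
      have HW := He.mul ((Hi.sub Hj).const_sub (M + M'))
      refine ⟨_, HW, ?_⟩
      have hU := hcrudeU i t ht0' hta
      rw [← hRidef] at hU
      have hL := hcrudeL j t ht0' hta
      rw [← hRjdef] at hL
      have hkey : Ri - Rj ≤ K * ((M + M') - ((inner ℝ v (x i t) : ℝ) - (inner ℝ v (x j t) : ℝ))) := by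
        have hring : K * ((M + M') - ((inner ℝ v (x i t) : ℝ) - (inner ℝ v (x j t) : ℝ)))
            = K * (M - (inner ℝ v (x i t) : ℝ)) - K * (-M' - (inner ℝ v (x j t) : ℝ)) := by ring
        rw [hring]
        linarith
      have h9 : K * Real.exp (K * t) *
            ((M + M') - ((inner ℝ v (x i t) : ℝ) - (inner ℝ v (x j t) : ℝ)))
            + Real.exp (K * t) * -(Ri - Rj)
          = Real.exp (K * t) *
            (K * ((M + M') - ((inner ℝ v (x i t) : ℝ) - (inner ℝ v (x j t) : ℝ))) - (Ri - Rj)) := by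
        ring
      simp only [Pi.sub_apply]
      rw [h9]
      exact mul_nonneg (Real.exp_pos _).le (by linarith)
    have hWm := mono_from_deriv hsbc hcontW hderW
    have hexpineq : Real.exp (-K * (T + τ)) * Real.exp (K * tseq (k+2)) ≤ Real.exp (K * sb) := by
      rw [← Real.exp_add]
      apply Real.exp_le_exp.2
      have hcsb : tseq (k+2) - sb ≤ T + τ := by
        have := hsb.1
        linarith [hc2]
      have := mul_le_mul_of_nonneg_left hcsb hKpos.le
      linarith
    have hA := mul_le_mul_of_nonneg_right hexpineq hΔnn
    have hB := mul_le_mul_of_nonneg_left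
      (show (M + M') ≤ (M + M') - ((inner ℝ v (x i sb) : ℝ) - (inner ℝ v (x j sb) : ℝ)) by linarith)
      (Real.exp_pos (K * sb)).le
    have hC2 : (Real.exp (-K * (T + τ)) * (M + M')) * Real.exp (K * tseq (k+2))
        ≤ ((M + M') - ((inner ℝ v (x i (tseq (k+2))) : ℝ) - (inner ℝ v (x j (tseq (k+2))) : ℝ)))
          * Real.exp (K * tseq (k+2)) := by
      linarith [hA, hB, hWm]
    have hfinal := le_of_mul_le_mul_right hC2 (Real.exp_pos (K * tseq (k+2)))
    have hCineq : 1 - Real.exp (-K * (T + τ)) ≤ C := by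
      rw [hC]; exact le_max_left _ _
    linarith [hfinal, mul_le_mul_of_nonneg_right hCineq hΔnn]
  · -- Case 2: the pair gap stays positive on the delayed window
    push_neg at hcase
    have hbpos : 0 < tseq (k+1) := by linarith
    have hbc' : tseq (k+1) ≤ tseq (k+2) := by linarith
    have hFint : ∀ t : ℝ, HasDerivAt (fun u => ∫ s in (tseq (k+1))..u, α s) (α t) t :=
      fun t => intervalIntegral.integral_hasDerivAt_right (hαcont.intervalIntegrable _ _)
        (hαcont.stronglyMeasurable.stronglyMeasurableAtFilter) hαcont.continuousAt
    have hFcont : Continuous (fun u => ∫ s in (tseq (k+1))..u, α s) :=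
      continuous_iff_continuousAt.2 fun t => (hFint t).continuousAt
    have hcontG : ContinuousOn (fun t => Real.exp (K * (t - tseq (k+1))) *
        ((M - (inner ℝ v (x i t) : ℝ)) + ((inner ℝ v (x j t) : ℝ) + M'))
        - ψ0 * (M + M') * ∫ s in (tseq (k+1))..t, α s) (Set.Icc (tseq (k+1)) (tseq (k+2))) := by
      apply ContinuousOn.sub
      · apply ContinuousOn.mul
        · exact (Real.continuous_exp.comp
            (continuous_const.mul (continuous_id.sub continuous_const))).continuousOn
        · apply ContinuousOn.add
          · exact continuousOn_const.sub ((hinnercont v).comp_continuousOn ((hxcont i).mono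
              (fun z hz => by
                simp only [Set.mem_Icc] at hz
                exact Set.mem_Ici.2 (by linarith [hz.1]))))
          · exact ((hinnercont v).comp_continuousOn ((hxcont j).mono
              (fun z hz => by
                simp only [Set.mem_Icc] at hz
                exact Set.mem_Ici.2 (by linarith [hz.1])))).add continuousOn_const
      · exact (continuous_const.mul hFcont).continuousOn
    have hderG : ∀ t ∈ Set.Ioo (tseq (k+1)) (tseq (k+2)), ∃ d,
        HasDerivAt (fun t => Real.exp (K * (t - tseq (k+1))) *
          ((M - (inner ℝ v (x i t) : ℝ)) + ((inner ℝ v (x j t) : ℝ) + M'))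
          - ψ0 * (M + M') * ∫ s in (tseq (k+1))..t, α s) d t ∧ 0 ≤ d := by
      intro t htIoo
      have ht0' : 0 < t := lt_trans hbpos htIoo.1
      have hta : tseq k ≤ t := by linarith [htIoo.1, hb1]
      have hupos := hcase (t - τ) ⟨by linarith [htIoo.1], by linarith [htIoo.2]⟩
      have Hi := hyd v i t ht0'
      have Hj := hyd v j t ht0'
      set Ri := α t / ((N:ℝ) - 1) * ∑ l ∈ Finset.univ.filter (fun l => l ≠ i),
        ψ (x i t) (x l (t - τ)) * ((inner ℝ v (x l (t - τ)) : ℝ) - (inner ℝ v (x i t) : ℝ)) with hRidef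
      set Rj := α t / ((N:ℝ) - 1) * ∑ l ∈ Finset.univ.filter (fun l => l ≠ j),
        ψ (x j t) (x l (t - τ)) * ((inner ℝ v (x l (t - τ)) : ℝ) - (inner ℝ v (x j t) : ℝ)) with hRjdef
      have Hφ := (Hi.const_sub M).add (Hj.add_const M')
      have He : HasDerivAt (fun u => Real.exp (K * (u - tseq (k+1))))
          (K * Real.exp (K * (t - tseq (k+1)))) t := by
        have h1 : HasDerivAt (fun u : ℝ => K * (u - tseq (k+1))) K t := by
          simpa using ((hasDerivAt_id t).sub_const (tseq (k+1))).const_mul K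
        simpa [mul_comm] using h1.exp
      have HG := (He.mul Hφ).sub ((hFint t).const_mul (ψ0 * (M + M')))
      refine ⟨_, HG, ?_⟩
      have hupI : (inner ℝ v (x i t) : ℝ) ≤ M := hMglob i t (by linarith)
      have hloJ : -M' ≤ (inner ℝ v (x j t) : ℝ) := hmglob j t (by linarith)
      have hSIle : ∑ l ∈ Finset.univ.filter (fun l => l ≠ i),
          ψ (x i t) (x l (t - τ)) * ((inner ℝ v (x l (t - τ)) : ℝ) - (inner ℝ v (x i t) : ℝ))
          ≤ ψ0 * (∑ l ∈ Finset.univ.filter (fun l => l ≠ i), ((inner ℝ v (x l (t - τ)) : ℝ) - M))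
            + ((N:ℝ) - 1) * (K * (M - (inner ℝ v (x i t) : ℝ))) := by
        have hterm : ∀ l ∈ Finset.univ.filter (fun l => l ≠ i),
            ψ (x i t) (x l (t - τ)) * ((inner ℝ v (x l (t - τ)) : ℝ) - (inner ℝ v (x i t) : ℝ))
            ≤ ψ0 * ((inner ℝ v (x l (t - τ)) : ℝ) - M) + K * (M - (inner ℝ v (x i t) : ℝ)) := by
          intro l _hl
          have hlup : (inner ℝ v (x l (t - τ)) : ℝ) ≤ M := hMglob l (t - τ) (by linarith)
          have h1 : ψ (x i t) (x l (t - τ)) * ((inner ℝ v (x l (t - τ)) : ℝ) - M)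
              ≤ ψ0 * ((inner ℝ v (x l (t - τ)) : ℝ) - M) :=
            mul_le_mul_of_nonpos_right (hψ0x i l t ht0'.le) (by linarith)
          have h2 : ψ (x i t) (x l (t - τ)) * (M - (inner ℝ v (x i t) : ℝ))
              ≤ K * (M - (inner ℝ v (x i t) : ℝ)) :=
            mul_le_mul_of_nonneg_right (hK _ _) (by linarith)
          have h3 : ψ (x i t) (x l (t - τ)) * ((inner ℝ v (x l (t - τ)) : ℝ) - (inner ℝ v (x i t) : ℝ))
              = ψ (x i t) (x l (t - τ)) * ((inner ℝ v (x l (t - τ)) : ℝ) - M)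
                + ψ (x i t) (x l (t - τ)) * (M - (inner ℝ v (x i t) : ℝ)) := by ring
          rw [h3]
          exact add_le_add h1 h2
        have heqI : ∑ l ∈ Finset.univ.filter (fun l => l ≠ i), (ψ0 * ((inner ℝ v (x l (t - τ)) : ℝ) - M) + K * (M - (inner ℝ v (x i t) : ℝ))) = ψ0 * (∑ l ∈ Finset.univ.filter (fun l => l ≠ i), ((inner ℝ v (x l (t - τ)) : ℝ) - M)) + ((N:ℝ) - 1) * (K * (M - (inner ℝ v (x i t) : ℝ))) := by
          rw [Finset.sum_add_distrib, ← Finset.mul_sum, Finset.sum_const, nsmul_eq_mul, hcardN i]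
        rw [← heqI]
        exact Finset.sum_le_sum hterm
      have hSJge : ψ0 * (∑ l ∈ Finset.univ.filter (fun l => l ≠ j), ((inner ℝ v (x l (t - τ)) : ℝ) + M'))
            + ((N:ℝ) - 1) * (K * (-M' - (inner ℝ v (x j t) : ℝ)))
          ≤ ∑ l ∈ Finset.univ.filter (fun l => l ≠ j),
            ψ (x j t) (x l (t - τ)) * ((inner ℝ v (x l (t - τ)) : ℝ) - (inner ℝ v (x j t) : ℝ)) := by
        have hterm : ∀ l ∈ Finset.univ.filter (fun l => l ≠ j),
            ψ0 * ((inner ℝ v (x l (t - τ)) : ℝ) + M') + K * (-M' - (inner ℝ v (x j t) : ℝ))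
            ≤ ψ (x j t) (x l (t - τ)) * ((inner ℝ v (x l (t - τ)) : ℝ) - (inner ℝ v (x j t) : ℝ)) := by
          intro l _hl
          have hllo : -M' ≤ (inner ℝ v (x l (t - τ)) : ℝ) := hmglob l (t - τ) (by linarith)
          have h1 : ψ0 * ((inner ℝ v (x l (t - τ)) : ℝ) + M')
              ≤ ψ (x j t) (x l (t - τ)) * ((inner ℝ v (x l (t - τ)) : ℝ) + M') :=
            mul_le_mul_of_nonneg_right (hψ0x j l t ht0'.le) (by linarith)
          have h2 : K * (-M' - (inner ℝ v (x j t) : ℝ))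
              ≤ ψ (x j t) (x l (t - τ)) * (-M' - (inner ℝ v (x j t) : ℝ)) :=
            mul_le_mul_of_nonpos_right (hK _ _) (by linarith)
          have h3 : ψ (x j t) (x l (t - τ)) * ((inner ℝ v (x l (t - τ)) : ℝ) + M')
              + ψ (x j t) (x l (t - τ)) * (-M' - (inner ℝ v (x j t) : ℝ))
              = ψ (x j t) (x l (t - τ)) * ((inner ℝ v (x l (t - τ)) : ℝ) - (inner ℝ v (x j t) : ℝ)) := by
            ring
          calc ψ0 * ((inner ℝ v (x l (t - τ)) : ℝ) + M') + K * (-M' - (inner ℝ v (x j t) : ℝ))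
              ≤ ψ (x j t) (x l (t - τ)) * ((inner ℝ v (x l (t - τ)) : ℝ) + M')
                + ψ (x j t) (x l (t - τ)) * (-M' - (inner ℝ v (x j t) : ℝ)) := add_le_add h1 h2
            _ = _ := h3
        have heqJ : ∑ l ∈ Finset.univ.filter (fun l => l ≠ j), (ψ0 * ((inner ℝ v (x l (t - τ)) : ℝ) + M') + K * (-M' - (inner ℝ v (x j t) : ℝ))) = ψ0 * (∑ l ∈ Finset.univ.filter (fun l => l ≠ j), ((inner ℝ v (x l (t - τ)) : ℝ) + M')) + ((N:ℝ) - 1) * (K * (-M' - (inner ℝ v (x j t) : ℝ))) := by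
          rw [Finset.sum_add_distrib, ← Finset.mul_sum, Finset.sum_const, nsmul_eq_mul, hcardN j]
        rw [← heqJ]
        exact Finset.sum_le_sum hterm
      have hENcard : (((Finset.univ.erase i).erase j).card : ℝ) = (N:ℝ) - 2 := by
        rw [Finset.card_erase_of_mem (Finset.mem_erase.2 ⟨hij.symm, Finset.mem_univ j⟩),
          Finset.card_erase_of_mem (Finset.mem_univ i), Finset.card_univ, Fintype.card_fin]
        have h1 : N - 1 - 1 = N - 2 := by omega
        rw [h1, Nat.cast_sub (by omega : 2 ≤ N)]
        norm_num
      have hsplit : (∑ l ∈ Finset.univ.filter (fun l => l ≠ j), ((inner ℝ v (x l (t - τ)) : ℝ) + M'))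
          - (∑ l ∈ Finset.univ.filter (fun l => l ≠ i), ((inner ℝ v (x l (t - τ)) : ℝ) - M))
          = ((inner ℝ v (x i (t - τ)) : ℝ) - (inner ℝ v (x j (t - τ)) : ℝ)) + ((N:ℝ) - 1) * (M + M') := by
        rw [Finset.filter_ne' Finset.univ i, Finset.filter_ne' Finset.univ j,
          ← Finset.add_sum_erase _ (fun l => ((inner ℝ v (x l (t - τ)) : ℝ) + M'))
            (Finset.mem_erase.2 ⟨hij, Finset.mem_univ i⟩),
          ← Finset.add_sum_erase _ (fun l => ((inner ℝ v (x l (t - τ)) : ℝ) - M))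
            (Finset.mem_erase.2 ⟨hij.symm, Finset.mem_univ j⟩),
          Finset.erase_right_comm (s := Finset.univ) (a := j) (b := i)]
        have hsum3 : ∑ l ∈ (Finset.univ.erase i).erase j, ((inner ℝ v (x l (t - τ)) : ℝ) + M')
            - ∑ l ∈ (Finset.univ.erase i).erase j, ((inner ℝ v (x l (t - τ)) : ℝ) - M)
            = ((N:ℝ) - 2) * (M + M') := by
          rw [← Finset.sum_sub_distrib]
          have hcongr : ∀ l ∈ (Finset.univ.erase i).erase j,
              ((inner ℝ v (x l (t - τ)) : ℝ) + M') - ((inner ℝ v (x l (t - τ)) : ℝ) - M) = M + M' :=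
            fun l _ => by ring
          rw [Finset.sum_congr rfl hcongr, Finset.sum_const, nsmul_eq_mul, hENcard]
        linear_combination hsum3
      have hRiUB : Ri ≤ α t * (K * (M - (inner ℝ v (x i t) : ℝ))) + (α t / ((N:ℝ) - 1)) * (ψ0 * (∑ l ∈ Finset.univ.filter (fun l => l ≠ i), ((inner ℝ v (x l (t - τ)) : ℝ) - M))) := by
        have h2 := mul_le_mul_of_nonneg_left hSIle (div_nonneg (hα0 t) hNR.le)
        rw [← hRidef] at h2
        have h3 : α t / ((N:ℝ) - 1) * (ψ0 * (∑ l ∈ Finset.univ.filter (fun l => l ≠ i), ((inner ℝ v (x l (t - τ)) : ℝ) - M)) + ((N:ℝ) - 1) * (K * (M - (inner ℝ v (x i t) : ℝ)))) = α t * (K * (M - (inner ℝ v (x i t) : ℝ))) + (α t / ((N:ℝ) - 1)) * (ψ0 * (∑ l ∈ Finset.univ.filter (fun l => l ≠ i), ((inner ℝ v (x l (t - τ)) : ℝ) - M))) := by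
          field_simp
          ring
        rw [h3] at h2
        exact h2
      have hRjLB : α t * (K * (-M' - (inner ℝ v (x j t) : ℝ))) + (α t / ((N:ℝ) - 1)) * (ψ0 * (∑ l ∈ Finset.univ.filter (fun l => l ≠ j), ((inner ℝ v (x l (t - τ)) : ℝ) + M'))) ≤ Rj := by
        have h2 := mul_le_mul_of_nonneg_left hSJge (div_nonneg (hα0 t) hNR.le)
        rw [← hRjdef] at h2
        have h3 : α t / ((N:ℝ) - 1) * (ψ0 * (∑ l ∈ Finset.univ.filter (fun l => l ≠ j), ((inner ℝ v (x l (t - τ)) : ℝ) + M')) + ((N:ℝ) - 1) * (K * (-M' - (inner ℝ v (x j t) : ℝ)))) = α t * (K * (-M' - (inner ℝ v (x j t) : ℝ))) + (α t / ((N:ℝ) - 1)) * (ψ0 * (∑ l ∈ Finset.univ.filter (fun l => l ≠ j), ((inner ℝ v (x l (t - τ)) : ℝ) + M'))) := by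
          field_simp
          ring
        rw [h3] at h2
        exact h2
      have hq0 : 0 ≤ α t / ((N:ℝ) - 1) * ψ0 :=
        mul_nonneg (div_nonneg (hα0 t) hNR.le) hψ0pos.le
      have hSdiff : ((N:ℝ) - 1) * (M + M')
          ≤ (∑ l ∈ Finset.univ.filter (fun l => l ≠ j), ((inner ℝ v (x l (t - τ)) : ℝ) + M'))
            - (∑ l ∈ Finset.univ.filter (fun l => l ≠ i), ((inner ℝ v (x l (t - τ)) : ℝ) - M)) := by
        rw [hsplit]
        linarith [hupos]
      have h7 := mul_le_mul_of_nonneg_left hSdiff hq0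
      have h8 : (α t / ((N:ℝ) - 1) * ψ0) * (((N:ℝ) - 1) * (M + M')) = α t * (ψ0 * (M + M')) := by
        field_simp
      have hφnn : 0 ≤ (M - (inner ℝ v (x i t) : ℝ)) + ((inner ℝ v (x j t) : ℝ) + M') := by linarith
      have haxle : 0 ≤ (1 - α t) * (K * ((M - (inner ℝ v (x i t) : ℝ)) + ((inner ℝ v (x j t) : ℝ) + M'))) :=
        mul_nonneg (by linarith [hα1 t]) (mul_nonneg hKpos.le hφnn)
      have haxeq : (1 - α t) * (K * ((M - (inner ℝ v (x i t) : ℝ)) + ((inner ℝ v (x j t) : ℝ) + M'))) = K * ((M - (inner ℝ v (x i t) : ℝ)) + ((inner ℝ v (x j t) : ℝ) + M')) - α t * (K * ((M - (inner ℝ v (x i t) : ℝ)) + ((inner ℝ v (x j t) : ℝ) + M'))) := by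
        ring
      have hax : α t * (K * ((M - (inner ℝ v (x i t) : ℝ)) + ((inner ℝ v (x j t) : ℝ) + M')))
          ≤ K * ((M - (inner ℝ v (x i t) : ℝ)) + ((inner ℝ v (x j t) : ℝ) + M')) := by
        linarith [haxle, haxeq]
      have hkey2 : α t * (ψ0 * (M + M'))
          ≤ K * ((M - (inner ℝ v (x i t) : ℝ)) + ((inner ℝ v (x j t) : ℝ) + M')) + (-Ri + Rj) := by
        linarith [hRiUB, hRjLB, h7, h8, hax]
      have h1e : 1 ≤ Real.exp (K * (t - tseq (k+1))) := by
        rw [← Real.exp_zero]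
        apply Real.exp_le_exp.2
        exact mul_nonneg hKpos.le (by linarith [htIoo.1])
      have hX : 0 ≤ K * ((M - (inner ℝ v (x i t) : ℝ)) + ((inner ℝ v (x j t) : ℝ) + M')) + (-Ri + Rj) :=
        le_trans (mul_nonneg (hα0 t) (mul_nonneg hψ0pos.le hΔnn)) hkey2
      have hY : α t * (ψ0 * (M + M'))
          ≤ Real.exp (K * (t - tseq (k+1))) *
            (K * ((M - (inner ℝ v (x i t) : ℝ)) + ((inner ℝ v (x j t) : ℝ) + M')) + (-Ri + Rj)) :=
        le_trans hkey2 (le_mul_of_one_le_left hX h1e)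
      simp only [Pi.add_apply]
      linarith [hY]
    have hGm := mono_from_deriv hbc' hcontG hderG
    simp only [sub_self, mul_zero, Real.exp_zero, one_mul, intervalIntegral.integral_same,
      sub_zero] at hGm
    have hφbnn : 0 ≤ (M - (inner ℝ v (x i (tseq (k+1))) : ℝ)) + ((inner ℝ v (x j (tseq (k+1))) : ℝ) + M') := by
      have h1 := hMglob i (tseq (k+1)) (by linarith)
      have h2 := hmglob j (tseq (k+1)) (by linarith)
      linarith
    have hφcnn : 0 ≤ (M - (inner ℝ v (x i (tseq (k+2))) : ℝ)) + ((inner ℝ v (x j (tseq (k+2))) : ℝ) + M') := by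
      have h1 := hMglob i (tseq (k+2)) (by linarith)
      have h2 := hmglob j (tseq (k+2)) (by linarith)
      linarith
    have hIab := mul_le_mul_of_nonneg_left hintbc (mul_nonneg hψ0pos.le hΔnn)
    have hEφ : ψ0 * (M + M') * abar ≤ Real.exp (K * (tseq (k+2) - tseq (k+1))) *
        ((M - (inner ℝ v (x i (tseq (k+2))) : ℝ)) + ((inner ℝ v (x j (tseq (k+2))) : ℝ) + M')) := by
      linarith [hGm, hIab, hφbnn]
    have hee : Real.exp (-K * T) * Real.exp (K * (tseq (k+2) - tseq (k+1))) ≤ 1 := by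
      rw [← Real.exp_add, ← Real.exp_zero]
      apply Real.exp_le_exp.2
      have := mul_le_mul_of_nonneg_left hc2 hKpos.le
      linarith
    have h2' := mul_le_mul_of_nonneg_left hEφ (Real.exp_pos (-K * T)).le
    have h3' := mul_le_mul_of_nonneg_right hee hφcnn
    have hφc : ψ0 * Real.exp (-K * T) * abar * (M + M')
        ≤ (M - (inner ℝ v (x i (tseq (k+2))) : ℝ)) + ((inner ℝ v (x j (tseq (k+2))) : ℝ) + M') := by
      linarith [h2', h3']
    have hC2 : 1 - ψ0 * Real.exp (-K * T) * abar ≤ C := by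
      rw [hC]; exact le_max_right _ _
    linarith [hφc, mul_le_mul_of_nonneg_right hC2 hΔnn]
end
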